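/- arXiv:0908.1843 — 4 statements merged into one kernel-verified Lean document; each statement's English description precedes it below -/
import Mathlib

section
/- Let (E,P) be a random locally convex module over K, x ∈ E, and G ⊆ E a nonempty subset satisfying 1_A·y + 1_{Aᶜ}·z ∈ G for all A ∈ F and y,z ∈ G. Then x belongs to the closure of G in the (ε,λ)-topology if and only if d*(x,G) = 0. -/
open MeasureTheory

section Preamble

variable {Ω : Type*} [MeasurableSpace Ω] {μ : Measure Ω}

/-- `L⁰(F,𝕜)` is a commutative ring under the pointwise operations. -/
noncomputable instance L0.instCommRing {𝕜 : Type*} [RCLike 𝕜] : CommRing (Ω →ₘ[μ] 𝕜) :=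
  { (inferInstance : AddCommGroup (Ω →ₘ[μ] 𝕜)),
    (inferInstance : CommMonoid (Ω →ₘ[μ] 𝕜)) with
    left_distrib := fun f g h => AEEqFun.toGerm_injective <| by
      simp only [AEEqFun.mul_toGerm, AEEqFun.add_toGerm, mul_add]
    right_distrib := fun f g h => AEEqFun.toGerm_injective <| by
      simp only [AEEqFun.mul_toGerm, AEEqFun.add_toGerm, add_mul]
    zero_mul := fun f => AEEqFun.toGerm_injective <| by
      simp only [AEEqFun.mul_toGerm, AEEqFun.zero_toGerm, zero_mul]
    mul_zero := fun f => AEEqFun.toGerm_injective <| by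
      simp only [AEEqFun.mul_toGerm, AEEqFun.zero_toGerm, mul_zero] }

/-- The indicator function of a measurable set `A`, as an element of `L⁰(F,𝕜)`. -/
noncomputable def L0.ind (μ : Measure Ω) (𝕜 : Type*) [RCLike 𝕜] (A : Set Ω)
    (_hA : MeasurableSet A) : Ω →ₘ[μ] 𝕜 :=
  AEEqFun.mk (A.indicator fun _ => (1 : 𝕜))
    (stronglyMeasurable_const.indicator _hA).aestronglyMeasurable

/-- The pointwise modulus `|ξ|` of an element of `L⁰(F,𝕜)`, as an element of `L⁰(F,ℝ)`. -/
noncomputable def L0.abs {𝕜 : Type*} [RCLike 𝕜] (ξ : Ω →ₘ[μ] 𝕜) : Ω →ₘ[μ] ℝ :=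
  AEEqFun.comp (fun z => ‖z‖) continuous_norm ξ

/-- An element of `L⁰(F,ℝ)` is strictly positive on `Ω`, i.e. lies in `L⁰₊₊`. -/
def L0.StrPos (ξ : Ω →ₘ[μ] ℝ) : Prop := ∀ᵐ ω ∂μ, 0 < ξ ω

/-- A countable measurable partition of `Ω`. -/
structure IsMeasPartition {Ω : Type*} [MeasurableSpace Ω] (A : ℕ → Set Ω) : Prop where
  meas : ∀ n, MeasurableSet (A n)
  disj : Pairwise (Function.onFun Disjoint A)
  cover : (⋃ n, A n) = Set.univ

variable {𝕜 : Type*} [RCLike 𝕜] {E : Type*} [AddCommGroup E] [Module (Ω →ₘ[μ] 𝕜) E]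
  {ι : Type*}

/-- `(E, ν)` is a random locally convex module over `𝕜` with base `(Ω,F,P)`: `ν` is a
separating family of `L⁰`-seminorms on the `L⁰(F,𝕜)`-module `E`. -/
structure IsRLCModule (𝕜 : Type*) [RCLike 𝕜] {Ω : Type*} [MeasurableSpace Ω] {μ : Measure Ω}
    {E : Type*} [AddCommGroup E] [Module (Ω →ₘ[μ] 𝕜) E] {ι : Type*} (ν : ι → E → Ω →ₘ[μ] ℝ) : Prop where
  nonneg : ∀ i x, 0 ≤ ν i x
  smul : ∀ i (ξ : Ω →ₘ[μ] 𝕜) x, ν i (ξ • x) = L0.abs ξ * ν i x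
  add_le : ∀ i x y, ν i (x + y) ≤ ν i x + ν i y
  separating : ∀ x, (∀ i, ν i x = 0) → x = 0

/-- `(E, n)` is a random normed module over `𝕜` with base `(Ω,F,P)`. -/
structure IsRNModule (𝕜 : Type*) [RCLike 𝕜] {Ω : Type*} [MeasurableSpace Ω] {μ : Measure Ω}
    {E : Type*} [AddCommGroup E] [Module (Ω →ₘ[μ] 𝕜) E] (n : E → Ω →ₘ[μ] ℝ) : Prop where
  nonneg : ∀ x, 0 ≤ n x
  smul : ∀ (ξ : Ω →ₘ[μ] 𝕜) x, n (ξ • x) = L0.abs ξ * n x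
  add_le : ∀ x y, n (x + y) ≤ n x + n y
  definite : ∀ x, n x = 0 → x = 0

/-- `‖x‖_Q`, the `L⁰`-seminorm associated with a finite nonempty subfamily `Q ⊆ P`. -/
noncomputable def nQ (ν : ι → E → Ω →ₘ[μ] ℝ) (Q : Finset ι) (hQ : Q.Nonempty) (x : E) :
    Ω →ₘ[μ] ℝ :=
  Q.sup' hQ fun i => ν i x

/-- The neighbourhood filter of a point in the locally `L⁰`-convex topology `T_c`,
generated by the balls `x + B_Q(ε)` with `Q` finite and `ε ∈ L⁰₊₊`. -/
noncomputable def tcNhd (ν : ι → E → Ω →ₘ[μ] ℝ) (x : E) : Filter E :=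
  ⨅ (Q : {Q : Finset ι // Q.Nonempty}) (ε : {ε : Ω →ₘ[μ] ℝ // L0.StrPos ε}),
    Filter.principal {y | nQ ν Q.1 Q.2 (y - x) ≤ ε.1}

/-- The locally `L⁰`-convex topology `T_c` on `E` induced by the family `ν`. -/
noncomputable def tcTop (ν : ι → E → Ω →ₘ[μ] ℝ) : TopologicalSpace E :=
  .mkOfNhds (tcNhd ν)

/-- The neighbourhood filter of a point in the `(ε,λ)`-topology, generated by the
neighbourhoods `x + N(Q,ε,λ)`. -/
noncomputable def elNhd (ν : ι → E → Ω →ₘ[μ] ℝ) (x : E) : Filter E :=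
  ⨅ (Q : {Q : Finset ι // Q.Nonempty}) (e : {e : ℝ // 0 < e}) (l : {l : ℝ // 0 < l ∧ l < 1}),
    Filter.principal {y | (μ {ω | nQ ν Q.1 Q.2 (y - x) ω < e.1}).toReal > 1 - l.1}

/-- The `(ε,λ)`-topology on `E` induced by the family `ν`. -/
noncomputable def elTop (ν : ι → E → Ω →ₘ[μ] ℝ) : TopologicalSpace E :=
  .mkOfNhds (elNhd ν)

/-- A net (indexed by a directed preordered type) is Cauchy in the `(ε,λ)`-topology. -/
def ElCauchy (ν : ι → E → Ω →ₘ[μ] ℝ) {J : Type*} [Preorder J] (u : J → E) : Prop :=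
  ∀ (Q : Finset ι) (hQ : Q.Nonempty) (e l : ℝ), 0 < e → 0 < l → l < 1 →
    ∃ j₀, ∀ j k, j₀ ≤ j → j₀ ≤ k →
      (μ {ω | nQ ν Q hQ (u j - u k) ω < e}).toReal > 1 - l

/-- A net converges to `x` in the `(ε,λ)`-topology. -/
def ElLim (ν : ι → E → Ω →ₘ[μ] ℝ) {J : Type*} [Preorder J] (u : J → E) (x : E) : Prop :=
  ∀ (Q : Finset ι) (hQ : Q.Nonempty) (e l : ℝ), 0 < e → 0 < l → l < 1 →
    ∃ j₀, ∀ j, j₀ ≤ j → (μ {ω | nQ ν Q hQ (u j - x) ω < e}).toReal > 1 - l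

/-- `E` is complete in the `(ε,λ)`-topology: every Cauchy net converges. -/
def ElComplete (ν : ι → E → Ω →ₘ[μ] ℝ) : Prop :=
  ∀ (J : Type*) (_ : Preorder J) (_ : IsDirected J (· ≤ ·)) (_ : Nonempty J) (u : J → E),
    ElCauchy ν u → ∃ x, ElLim ν u x

/-- A net is Cauchy in the locally `L⁰`-convex topology `T_c`. -/
def TcCauchy (ν : ι → E → Ω →ₘ[μ] ℝ) {J : Type*} [Preorder J] (u : J → E) : Prop :=
  ∀ (Q : Finset ι) (hQ : Q.Nonempty) (ε : Ω →ₘ[μ] ℝ), L0.StrPos ε →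
    ∃ j₀, ∀ j k, j₀ ≤ j → j₀ ≤ k → nQ ν Q hQ (u j - u k) ≤ ε

/-- A net converges to `x` in the locally `L⁰`-convex topology `T_c`. -/
def TcLim (ν : ι → E → Ω →ₘ[μ] ℝ) {J : Type*} [Preorder J] (u : J → E) (x : E) : Prop :=
  ∀ (Q : Finset ι) (hQ : Q.Nonempty) (ε : Ω →ₘ[μ] ℝ), L0.StrPos ε →
    ∃ j₀, ∀ j, j₀ ≤ j → nQ ν Q hQ (u j - x) ≤ ε

/-- `E` is complete in the locally `L⁰`-convex topology: every Cauchy net converges. -/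
def TcComplete (ν : ι → E → Ω →ₘ[μ] ℝ) : Prop :=
  ∀ (J : Type*) (_ : Preorder J) (_ : IsDirected J (· ≤ ·)) (_ : Nonempty J) (u : J → E),
    TcCauchy ν u → ∃ x, TcLim ν u x

/-- A subset `G` of the `L⁰(F,𝕜)`-module `E` has the countable concatenation property:
every countable concatenation of elements of `G` is well defined and lies in `G`. -/
def HasCCP (μ : Measure Ω) (𝕜 : Type*) [RCLike 𝕜] {E : Type*} [AddCommGroup E]
    [Module (Ω →ₘ[μ] 𝕜) E] (G : Set E) : Prop :=
  ∀ (A : ℕ → Set Ω) (hA : IsMeasPartition A) (x : ℕ → E), (∀ n, x n ∈ G) →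
    ∃ x₀ ∈ G, ∀ n, L0.ind μ 𝕜 (A n) (hA.meas n) • x₀ = L0.ind μ 𝕜 (A n) (hA.meas n) • x n

end Preamble

section Aux
open Filter MeasureTheory

namespace ELAux

variable {Ω : Type*} [MeasurableSpace Ω] {μ : Measure Ω}

lemma coeFn_sup' {ι : Type*} (Q : Finset ι) (hQ : Q.Nonempty) (f : ι → Ω →ₘ[μ] ℝ) :
    ⇑(Q.sup' hQ f) =ᵐ[μ] fun ω => Q.sup' hQ (fun i => f i ω) := by
  induction hQ using Finset.Nonempty.cons_induction with
  | singleton i =>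
    simp only [Finset.sup'_singleton]
    exact Filter.EventuallyEq.rfl
  | cons i s hi hs ih =>
    simp only [Finset.sup'_cons hs]
    filter_upwards [AEEqFun.coeFn_sup (f i) (s.sup' hs f), ih] with ω h1 h2
    simp [h1, h2]

lemma le_iff {f g : Ω →ₘ[μ] ℝ} : f ≤ g ↔ ∀ᵐ ω ∂μ, f ω ≤ g ω :=
  AEEqFun.coeFn_le.symm


variable {𝕜 : Type*} [RCLike 𝕜]

lemma nonneg_iff {f : Ω →ₘ[μ] ℝ} : 0 ≤ f ↔ ∀ᵐ ω ∂μ, 0 ≤ f ω := by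
  rw [le_iff]
  constructor <;> intro h <;>
    [skip; skip] <;>
  · filter_upwards [h, AEEqFun.coeFn_zero (β := ℝ) (μ := μ)] with ω h1 h2
    first
    | (rw [h2] at h1; exact h1)
    | (rw [h2]; exact h1)

lemma add_le_add' {f g f' g' : Ω →ₘ[μ] ℝ} (h1 : f ≤ f') (h2 : g ≤ g') : f + g ≤ f' + g' := by
  rw [le_iff] at *
  filter_upwards [h1, h2, AEEqFun.coeFn_add f g, AEEqFun.coeFn_add f' g'] with ω a b c d
  rw [c, d]
  exact add_le_add a b

lemma coeFn_ind (A : Set Ω) (hA : MeasurableSet A) :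
    ⇑(L0.ind μ 𝕜 A hA) =ᵐ[μ] A.indicator (fun _ => (1:𝕜)) := AEEqFun.coeFn_mk _ _

lemma coeFn_abs (ξ : Ω →ₘ[μ] 𝕜) : ⇑(L0.abs ξ) =ᵐ[μ] fun ω => ‖ξ ω‖ :=
  AEEqFun.coeFn_comp _ continuous_norm ξ

lemma abs_ind (A : Set Ω) (hA : MeasurableSet A) :
    L0.abs (L0.ind μ 𝕜 A hA) = L0.ind μ ℝ A hA := by
  apply AEEqFun.ext
  filter_upwards [coeFn_abs (L0.ind μ 𝕜 A hA), coeFn_ind (μ := μ) (𝕜 := 𝕜) A hA,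
    coeFn_ind (μ := μ) (𝕜 := ℝ) A hA] with ω h1 h2 h3
  rw [h1, h2, h3]
  by_cases hω : ω ∈ A <;> simp [hω]

lemma ind_add_compl (A : Set Ω) (hA : MeasurableSet A) :
    L0.ind μ 𝕜 A hA + L0.ind μ 𝕜 Aᶜ hA.compl = 1 := by
  apply AEEqFun.ext
  filter_upwards [AEEqFun.coeFn_add (L0.ind μ 𝕜 A hA) (L0.ind μ 𝕜 Aᶜ hA.compl),
    coeFn_ind (μ := μ) (𝕜 := 𝕜) A hA, coeFn_ind (μ := μ) (𝕜 := 𝕜) Aᶜ hA.compl,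
    AEEqFun.coeFn_one (β := 𝕜) (μ := μ)] with ω h1 h2 h3 h4
  rw [h1, Pi.add_apply, h2, h3, h4]
  by_cases hω : ω ∈ A <;> simp [hω]

lemma ind_mul_self (A : Set Ω) (hA : MeasurableSet A) :
    L0.ind μ 𝕜 A hA * L0.ind μ 𝕜 A hA = L0.ind μ 𝕜 A hA := by
  apply AEEqFun.ext
  filter_upwards [AEEqFun.coeFn_mul (L0.ind μ 𝕜 A hA) (L0.ind μ 𝕜 A hA),
    coeFn_ind (μ := μ) (𝕜 := 𝕜) A hA] with ω h1 h2
  rw [h1, Pi.mul_apply, h2]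
  by_cases hω : ω ∈ A <;> simp [hω]

lemma ind_mul_compl (A : Set Ω) (hA : MeasurableSet A) :
    L0.ind μ 𝕜 A hA * L0.ind μ 𝕜 Aᶜ hA.compl = 0 := by
  apply AEEqFun.ext
  filter_upwards [AEEqFun.coeFn_mul (L0.ind μ 𝕜 A hA) (L0.ind μ 𝕜 Aᶜ hA.compl),
    coeFn_ind (μ := μ) (𝕜 := 𝕜) A hA, coeFn_ind (μ := μ) (𝕜 := 𝕜) Aᶜ hA.compl,
    AEEqFun.coeFn_zero (β := 𝕜) (μ := μ)] with ω h1 h2 h3 h4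
  rw [h1, Pi.mul_apply, h2, h3, h4]
  by_cases hω : ω ∈ A <;> simp [hω]

lemma abs_one : L0.abs (1 : Ω →ₘ[μ] 𝕜) = 1 := by
  apply AEEqFun.ext
  filter_upwards [coeFn_abs (1 : Ω →ₘ[μ] 𝕜), AEEqFun.coeFn_one (β := 𝕜) (μ := μ),
    AEEqFun.coeFn_one (β := ℝ) (μ := μ)] with ω h1 h2 h3
  rw [h1, h2, h3]
  simp

lemma abs_neg_one : L0.abs (-1 : Ω →ₘ[μ] 𝕜) = 1 := by
  apply AEEqFun.ext
  filter_upwards [coeFn_abs (-1 : Ω →ₘ[μ] 𝕜), AEEqFun.coeFn_neg (1 : Ω →ₘ[μ] 𝕜),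
    AEEqFun.coeFn_one (β := 𝕜) (μ := μ), AEEqFun.coeFn_one (β := ℝ) (μ := μ)] with ω h1 h2 h3 h4
  rw [h1, h2, Pi.neg_apply, h3, h4]
  simp

variable {E : Type*} [AddCommGroup E] [Module (Ω →ₘ[μ] 𝕜) E] {ι : Type*}
  {ν : ι → E → Ω →ₘ[μ] ℝ}

lemma abs_zero : L0.abs (0 : Ω →ₘ[μ] 𝕜) = 0 := by
  apply AEEqFun.ext
  filter_upwards [coeFn_abs (0 : Ω →ₘ[μ] 𝕜), AEEqFun.coeFn_zero (β := 𝕜) (μ := μ),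
    AEEqFun.coeFn_zero (β := ℝ) (μ := μ)] with ω h1 h2 h3
  rw [h1, h2, h3]
  simp

lemma nu_zero (hν : IsRLCModule 𝕜 ν) (i : ι) : ν i (0 : E) = 0 := by
  have h := hν.smul i 0 0
  rwa [zero_smul, abs_zero, zero_mul] at h

lemma nu_neg (hν : IsRLCModule 𝕜 ν) (i : ι) (a : E) : ν i (-a) = ν i a := by
  have h := hν.smul i (-1) a
  rwa [neg_smul, one_smul, abs_neg_one, one_mul] at h

lemma nQ_zero (hν : IsRLCModule 𝕜 ν) (Q : Finset ι) (hQ : Q.Nonempty) :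
    nQ ν Q hQ (0 : E) = 0 := by
  simp only [nQ]
  rw [Finset.sup'_congr hQ rfl (fun i _ => nu_zero hν i), Finset.sup'_const]

lemma nQ_neg (hν : IsRLCModule 𝕜 ν) (Q : Finset ι) (hQ : Q.Nonempty) (a : E) :
    nQ ν Q hQ (-a) = nQ ν Q hQ a := by
  simp only [nQ]
  exact Finset.sup'_congr hQ rfl (fun i _ => nu_neg hν i a)

lemma nQ_nonneg (hν : IsRLCModule 𝕜 ν) (Q : Finset ι) (hQ : Q.Nonempty) (a : E) :
    0 ≤ nQ ν Q hQ a := by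
  obtain ⟨i, hi⟩ := hQ
  exact le_trans (hν.nonneg i a) (Finset.le_sup' (fun j => ν j a) hi)

lemma nQ_add_le (hν : IsRLCModule 𝕜 ν) (Q : Finset ι) (hQ : Q.Nonempty) (a b : E) :
    nQ ν Q hQ (a + b) ≤ nQ ν Q hQ a + nQ ν Q hQ b := by
  simp only [nQ]
  exact Finset.sup'_le _ _ fun i hi => le_trans (hν.add_le i a b)
    (add_le_add' (Finset.le_sup' (fun j => ν j a) hi) (Finset.le_sup' (fun j => ν j b) hi))

lemma nQ_mono (Q Q' : Finset ι) (hQ : Q.Nonempty) (hQ' : Q'.Nonempty) (hsub : Q ⊆ Q') (a : E) :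
    nQ ν Q hQ a ≤ nQ ν Q' hQ' a := by
  simp only [nQ]
  exact Finset.sup'_le _ _ fun i hi => Finset.le_sup' (fun j => ν j a) (hsub hi)

lemma exists_comb (hν : IsRLCModule 𝕜 ν) (x : E) {G : Set E}
    (hGstab : ∀ (A : Set Ω) (hA : MeasurableSet A) (y z : E), y ∈ G → z ∈ G →
      L0.ind μ 𝕜 A hA • y + L0.ind μ 𝕜 Aᶜ hA.compl • z ∈ G)
    {y z : E} (hy : y ∈ G) (hz : z ∈ G) (Q : Finset ι) (hQ : Q.Nonempty) :
    ∃ w ∈ G, nQ ν Q hQ (x - w) ≤ nQ ν Q hQ (x - y) ⊓ nQ ν Q hQ (x - z) := by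
  simp only [nQ]
  set fy := Q.sup' hQ fun i => ν i (x - y) with hfy
  set fz := Q.sup' hQ fun i => ν i (x - z) with hfz
  have hAm : MeasurableSet {ω | fy ω ≤ fz ω} := measurableSet_le fy.measurable fz.measurable
  set A := {ω | fy ω ≤ fz ω} with hA
  set IA := L0.ind μ 𝕜 A hAm with hIA
  set IB := L0.ind μ 𝕜 Aᶜ hAm.compl with hIB
  refine ⟨IA • y + IB • z, hGstab A hAm y z hy hz, ?_⟩
  have h1 : IA + IB = 1 := ind_add_compl A hAm
  have hsub : x - (IA • y + IB • z) = IA • (x - y) + IB • (x - z) := by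
    have hx : IA • x + IB • x = x := by rw [← add_smul, h1, one_smul]
    rw [smul_sub, smul_sub]
    conv_lhs => rw [← hx]
    abel
  rw [hsub]
  set s := IA • (x - y) + IB • (x - z) with hs
  have key : ∀ i ∈ Q, ν i s =
      L0.ind μ ℝ A hAm * ν i (x - y) + L0.ind μ ℝ Aᶜ hAm.compl * ν i (x - z) := by
    intro i _
    have hA1 : IA • s = IA • (x - y) := by
      rw [hs, smul_add, smul_smul, smul_smul, hIA, hIB, ind_mul_self, ind_mul_compl,
        zero_smul, add_zero]
    have hB1 : IB • s = IB • (x - z) := by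
      rw [hs, smul_add, smul_smul, smul_smul, hIA, hIB, mul_comm (L0.ind μ 𝕜 Aᶜ hAm.compl),
        ind_mul_compl, zero_smul, zero_add, ind_mul_self]
    calc ν i s = (L0.ind μ ℝ A hAm + L0.ind μ ℝ Aᶜ hAm.compl) * ν i s := by
          rw [ind_add_compl, one_mul]
      _ = L0.ind μ ℝ A hAm * ν i s + L0.ind μ ℝ Aᶜ hAm.compl * ν i s := by rw [add_mul]
      _ = ν i (IA • s) + ν i (IB • s) := by
          rw [hν.smul i IA s, hν.smul i IB s, hIA, hIB, abs_ind, abs_ind]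
      _ = ν i (IA • (x - y)) + ν i (IB • (x - z)) := by rw [hA1, hB1]
      _ = L0.ind μ ℝ A hAm * ν i (x - y) + L0.ind μ ℝ Aᶜ hAm.compl * ν i (x - z) := by
          rw [hν.smul i IA (x - y), hν.smul i IB (x - z), hIA, hIB, abs_ind, abs_ind]
  have hpoint : ∀ᵐ ω ∂μ, ∀ i ∈ Q, (ν i s) ω
      = A.indicator (fun _ => (1:ℝ)) ω * (ν i (x - y)) ω
        + Aᶜ.indicator (fun _ => (1:ℝ)) ω * (ν i (x - z)) ω := by
    rw [eventually_all_finset]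
    intro i hi
    filter_upwards [AEEqFun.coeFn_add (L0.ind μ ℝ A hAm * ν i (x - y))
        (L0.ind μ ℝ Aᶜ hAm.compl * ν i (x - z)),
      AEEqFun.coeFn_mul (L0.ind μ ℝ A hAm) (ν i (x - y)),
      AEEqFun.coeFn_mul (L0.ind μ ℝ Aᶜ hAm.compl) (ν i (x - z)),
      coeFn_ind (μ := μ) (𝕜 := ℝ) A hAm,
      coeFn_ind (μ := μ) (𝕜 := ℝ) Aᶜ hAm.compl] with ω h1 h2 h3 h4 h5
    rw [key i hi, h1, Pi.add_apply, h2, h3, Pi.mul_apply, Pi.mul_apply, h4, h5]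
  rw [le_iff]
  filter_upwards [hpoint, coeFn_sup' Q hQ (fun i => ν i s),
    coeFn_sup' Q hQ (fun i => ν i (x - y)), coeFn_sup' Q hQ (fun i => ν i (x - z)),
    AEEqFun.coeFn_inf fy fz] with ω h0 h1 h2 h3 h4
  rw [h1, h4]
  by_cases hω : ω ∈ A
  · have heq : ∀ i ∈ Q, (ν i s) ω = (ν i (x - y)) ω := by
      intro i hi
      rw [h0 i hi]
      simp [Set.indicator_of_mem hω, Set.indicator_of_notMem (by simpa using hω : ω ∉ Aᶜ)]
    have hle : (fy : Ω → ℝ) ω ≤ (fz : Ω → ℝ) ω := hω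
    rw [hfy, hfz] at hle
    rw [h2, h3] at hle
    rw [Finset.sup'_congr hQ rfl heq, hfy, hfz, h2, h3]
    exact le_inf le_rfl hle
  · have hnω : ω ∉ A := hω
    have heq : ∀ i ∈ Q, (ν i s) ω = (ν i (x - z)) ω := by
      intro i hi
      rw [h0 i hi]
      simp [Set.indicator_of_notMem hnω, Set.indicator_of_mem (by simpa using hnω : ω ∈ Aᶜ)]
    have hle : (fz : Ω → ℝ) ω ≤ (fy : Ω → ℝ) ω := (not_le.mp hω).le
    rw [hfy, hfz] at hle
    rw [h2, h3] at hle
    rw [Finset.sup'_congr hQ rfl heq, hfy, hfz, h2, h3]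
    exact le_inf hle le_rfl

section Meas
open scoped ENNReal NNReal
variable [IsProbabilityMeasure μ]

lemma meas_lt_compl (f : Ω →ₘ[μ] ℝ) (e : ℝ) :
    (μ {ω | f ω < e}).toReal = 1 - (μ {ω | e ≤ f ω}).toReal := by
  have hm : MeasurableSet {ω | e ≤ f ω} := measurableSet_le measurable_const f.measurable
  have hc : {ω | (f : Ω → ℝ) ω < e} = {ω | e ≤ (f : Ω → ℝ) ω}ᶜ := by
    ext ω; simp [not_le]
  rw [hc, measure_compl hm (measure_ne_top μ _), measure_univ,
    ENNReal.toReal_sub_of_le prob_le_one ENNReal.one_ne_top, ENNReal.toReal_one]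

lemma nonpos_of_meas (c : Ω →ₘ[μ] ℝ)
    (h : ∀ e l : ℝ, 0 < e → 0 < l → l < 1 → 1 - l < (μ {ω | c ω < e}).toReal) :
    c ≤ 0 := by
  have hz : ∀ e : ℝ, 0 < e → μ {ω | e ≤ c ω} = 0 := by
    intro e he
    have h2 : ∀ l : ℝ, 0 < l → l < 1 → (μ {ω | e ≤ c ω}).toReal < l := by
      intro l hl0 hl1
      have h3 := h e l he hl0 hl1
      rw [meas_lt_compl] at h3
      linarith
    have hto : (μ {ω | e ≤ c ω}).toReal ≤ 0 := by
      by_contra hpos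
      push_neg at hpos
      have h4 := h2 (min ((μ {ω | e ≤ c ω}).toReal) (1/2)) (lt_min hpos (by norm_num))
        (lt_of_le_of_lt (min_le_right _ _) (by norm_num))
      have h5 := min_le_left ((μ {ω | e ≤ c ω}).toReal) (1/2)
      linarith
    have := le_antisymm hto ENNReal.toReal_nonneg
    rcases (ENNReal.toReal_eq_zero_iff _).mp this with h6 | h6
    · exact h6
    · exact absurd h6 (measure_ne_top μ _)
  have hU : μ {ω | 0 < c ω} = 0 := by
    refine measure_mono_null ?_ (measure_iUnion_null fun n : ℕ => hz (1/(n+1)) (by positivity))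
    intro ω hω
    obtain ⟨n, hn⟩ := exists_nat_one_div_lt (show (0:ℝ) < (c : Ω → ℝ) ω from hω)
    exact Set.mem_iUnion.mpr ⟨n, hn.le⟩
  rw [le_iff]
  have hae : ∀ᵐ ω ∂μ, (c : Ω → ℝ) ω ≤ 0 := by
    rw [ae_iff]
    convert hU using 2
    ext ω
    simp [not_le]
  filter_upwards [hae, AEEqFun.coeFn_zero (β := ℝ) (μ := μ)] with ω h1 h2
  rw [h2]
  exact h1

lemma exists_meas_lt {α : Type*} (f : α → Ω →ₘ[μ] ℝ) {G : Set α} (hG : G.Nonempty)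
    (hpos : ∀ y ∈ G, (0 : Ω →ₘ[μ] ℝ) ≤ f y)
    (hdir : ∀ y ∈ G, ∀ z ∈ G, ∃ w ∈ G, f w ≤ f y ⊓ f z)
    (hglb : IsGLB {c | ∃ y ∈ G, c = f y} (0 : Ω →ₘ[μ] ℝ))
    (e l : ℝ) (he : 0 < e) (hl0 : 0 < l) (hl1 : l < 1) :
    ∃ y ∈ G, 1 - l < (μ {ω | (f y) ω < e}).toReal := by
  classical
  set h : α → Ω → ℝ≥0∞ := fun y ω => ENNReal.ofReal (min ((f y) ω) e) with hh
  have hmeas : ∀ y, Measurable (h y) := fun y =>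
    ENNReal.measurable_ofReal.comp ((f y).measurable.min measurable_const)
  have hble : ∀ y ω, h y ω ≤ ENNReal.ofReal e := fun y ω =>
    ENNReal.ofReal_le_ofReal (min_le_right _ _)
  have hIle : ∀ y, ∫⁻ ω, h y ω ∂μ ≤ ENNReal.ofReal e := fun y => by
    calc ∫⁻ ω, h y ω ∂μ ≤ ∫⁻ _, ENNReal.ofReal e ∂μ := lintegral_mono (hble y)
    _ = ENNReal.ofReal e := by simp
  have hIne : ∀ y, ∫⁻ ω, h y ω ∂μ ≠ ⊤ := fun y =>
    (lt_of_le_of_lt (hIle y) ENNReal.ofReal_lt_top).ne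
  have hGne : Nonempty {a : α // a ∈ G} := hG.to_subtype
  set δ : ℝ≥0∞ := ⨅ y : {a : α // a ∈ G}, ∫⁻ ω, h y.1 ω ∂μ with hδ
  have hδ_le : ∀ y, y ∈ G → δ ≤ ∫⁻ ω, h y ω ∂μ := fun y hy => iInf_le _ (⟨y, hy⟩ : {a : α // a ∈ G})
  have hδ_top : δ ≠ ⊤ := by
    obtain ⟨y₀, hy₀⟩ := hG
    exact (lt_of_le_of_lt (hδ_le y₀ hy₀) (lt_of_le_of_lt (hIle y₀) ENNReal.ofReal_lt_top)).ne
  have hmono : ∀ y z : α, f y ≤ f z → ∫⁻ ω, h y ω ∂μ ≤ ∫⁻ ω, h z ω ∂μ := by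
    intro y z hle
    refine lintegral_mono_ae ?_
    filter_upwards [le_iff.mp hle] with ω hω
    exact ENNReal.ofReal_le_ofReal (min_le_min hω le_rfl)
  have hstep : ∀ n : ℕ, ∃ y ∈ G, ∫⁻ ω, h y ω ∂μ < δ + ((n : ℝ≥0∞) + 1)⁻¹ := by
    intro n
    by_contra hcon
    push_neg at hcon
    have h1 : δ + ((n : ℝ≥0∞) + 1)⁻¹ ≤ δ := le_iInf fun y => hcon y.1 y.2
    have h2 : δ < δ + ((n : ℝ≥0∞) + 1)⁻¹ :=
      ENNReal.lt_add_right hδ_top (ENNReal.inv_ne_zero.mpr (by simp))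
    exact absurd (lt_of_lt_of_le h2 h1) (lt_irrefl δ)
  choose yseq hyG hyI using hstep
  choose comb hcombG hcombLe using hdir
  let W : ℕ → {a : α // a ∈ G} := fun n => Nat.rec ⟨yseq 0, hyG 0⟩
    (fun n p => ⟨comb p.1 p.2 (yseq (n+1)) (hyG (n+1)),
      hcombG p.1 p.2 (yseq (n+1)) (hyG (n+1))⟩) n
  have hWsucc : ∀ n, f (W (n+1)).1 ≤ f (W n).1 ⊓ f (yseq (n+1)) := fun n =>
    hcombLe (W n).1 (W n).2 (yseq (n+1)) (hyG (n+1))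
  have hWI : ∀ n, ∫⁻ ω, h (W n).1 ω ∂μ < δ + ((n : ℝ≥0∞) + 1)⁻¹ := by
    intro n
    cases n with
    | zero => exact hyI 0
    | succ n =>
      exact lt_of_le_of_lt (hmono _ _ (le_trans (hWsucc n) inf_le_right)) (hyI (n+1))
  have hWanti : ∀ n : ℕ, (fun ω => h (W (n+1)).1 ω) ≤ᵐ[μ] (fun ω => h (W n).1 ω) := by
    intro n
    filter_upwards [le_iff.mp (le_trans (hWsucc n) inf_le_left)] with ω hω
    exact ENNReal.ofReal_le_ofReal (min_le_min hω le_rfl)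
  set φ : Ω → ℝ≥0∞ := fun ω => ⨅ n, h (W n).1 ω with hφ
  have hφmeas : Measurable φ := Measurable.iInf fun n => hmeas _
  have hφle : ∀ ω, φ ω ≤ ENNReal.ofReal e := fun ω =>
    le_trans (iInf_le _ 0) (hble _ ω)
  have hφtop : ∀ ω, φ ω ≠ ⊤ := fun ω => (lt_of_le_of_lt (hφle ω) ENNReal.ofReal_lt_top).ne
  have hφδ : ∫⁻ ω, φ ω ∂μ = δ := by
    rw [hφ]
    rw [lintegral_iInf_ae (fun n => hmeas _) hWanti (hIne _)]
    apply le_antisymm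
    · refine ENNReal.le_of_forall_pos_le_add fun ε hε _ => ?_
      obtain ⟨n, hn⟩ := ENNReal.exists_inv_nat_lt (a := (ε : ℝ≥0∞)) (by
        simpa using hε.ne')
      refine iInf_le_of_le n (le_trans (hWI n).le (add_le_add_right ?_ δ))
      exact le_trans (ENNReal.inv_le_inv' (le_add_of_nonneg_right zero_le_one)) hn.le
    · exact le_iInf fun n => hδ_le _ (W n).2
  have hlow : ∀ y, y ∈ G → ∀ᵐ ω ∂μ, φ ω ≤ h y ω := by
    intro y hy
    have hψlint : ∫⁻ ω, ⨅ n, (h (W n).1 ω ⊓ h y ω) ∂μ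
        = ⨅ n, ∫⁻ ω, (h (W n).1 ω ⊓ h y ω) ∂μ := by
      refine lintegral_iInf_ae (fun n => (hmeas _).min (hmeas y))
        (fun n => (hWanti n).mono fun ω hω => inf_le_inf hω le_rfl) ?_
      exact ne_top_of_le_ne_top (hIne (W 0).1) (lintegral_mono fun ω => inf_le_left)
    have hψge : δ ≤ ∫⁻ ω, ⨅ n, (h (W n).1 ω ⊓ h y ω) ∂μ := by
      rw [hψlint]
      refine le_iInf fun n => ?_
      obtain ⟨d, hdG, hdle⟩ : ∃ w ∈ G, f w ≤ f (W n).1 ⊓ f y :=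
        ⟨comb (W n).1 (W n).2 y hy, hcombG (W n).1 (W n).2 y hy, hcombLe (W n).1 (W n).2 y hy⟩
      refine le_trans (hδ_le d hdG) (lintegral_mono_ae ?_)
      filter_upwards [le_iff.mp hdle, AEEqFun.coeFn_inf (f (W n).1) (f y)] with ω h1 h2
      rw [h2] at h1
      exact le_inf (ENNReal.ofReal_le_ofReal (min_le_min (h1.trans inf_le_left) le_rfl))
        (ENNReal.ofReal_le_ofReal (min_le_min (h1.trans inf_le_right) le_rfl))
    have hpt : (fun ω => ⨅ n, (h (W n).1 ω ⊓ h y ω)) = fun ω => φ ω ⊓ h y ω := by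
      funext ω
      rw [hφ]
      exact (iInf_inf).symm
    rw [hpt] at hψge
    have hint : ∫⁻ ω, (φ ω ⊓ h y ω) ∂μ = δ :=
      le_antisymm (le_trans (lintegral_mono fun ω => inf_le_left) hφδ.le) hψge
    have hsub0 : ∫⁻ ω, (φ ω - (φ ω ⊓ h y ω)) ∂μ = 0 := by
      rw [lintegral_sub (hφmeas.min (hmeas y))
        (by rw [hint]; exact hδ_top) (ae_of_all _ fun ω => inf_le_left), hint, hφδ,
        tsub_self]
    have hae0 : (fun ω => φ ω - (φ ω ⊓ h y ω)) =ᵐ[μ] 0 :=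
      (lintegral_eq_zero_iff (hφmeas.sub (hφmeas.min (hmeas y)))).mp hsub0
    filter_upwards [hae0] with ω hω
    have : φ ω ≤ φ ω ⊓ h y ω := tsub_eq_zero_iff_le.mp hω
    exact le_trans this inf_le_right
  have hφ0 : ∀ᵐ ω ∂μ, φ ω = 0 := by
    set c : Ω →ₘ[μ] ℝ := AEEqFun.mk (fun ω => (φ ω).toReal)
      (ENNReal.measurable_toReal.comp hφmeas).aestronglyMeasurable with hc
    have hlb : c ∈ lowerBounds {c | ∃ y ∈ G, c = f y} := by
      rintro g ⟨y, hy, rfl⟩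
      rw [le_iff]
      filter_upwards [AEEqFun.coeFn_mk (fun ω => (φ ω).toReal)
          (ENNReal.measurable_toReal.comp hφmeas).aestronglyMeasurable,
        hlow y hy, nonneg_iff.mp (hpos y hy)] with ω h1 h2 h3
      rw [hc, h1]
      have h4 : (φ ω).toReal ≤ (h y ω).toReal :=
        ENNReal.toReal_mono ENNReal.ofReal_ne_top h2
      have h5 : (h y ω).toReal = min ((f y) ω) e := ENNReal.toReal_ofReal (le_min h3 he.le)
      rw [h5] at h4
      exact h4.trans (min_le_left _ _)
    have hc0 : c ≤ 0 := hglb.2 hlb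
    rw [le_iff] at hc0
    filter_upwards [hc0, AEEqFun.coeFn_mk (fun ω => (φ ω).toReal)
        (ENNReal.measurable_toReal.comp hφmeas).aestronglyMeasurable,
      AEEqFun.coeFn_zero (β := ℝ) (μ := μ)] with ω h1 h2 h3
    rw [hc, h2, h3] at h1
    have h4 : (φ ω).toReal = 0 := le_antisymm h1 ENNReal.toReal_nonneg
    rcases (ENNReal.toReal_eq_zero_iff _).mp h4 with h5 | h5
    · exact h5
    · exact absurd h5 (hφtop ω)
  have hδ0 : δ = 0 := by
    rw [← hφδ]
    rw [lintegral_congr_ae hφ0]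
    simp
  have hlt : δ < ENNReal.ofReal (e * l) := by
    rw [hδ0]
    exact ENNReal.ofReal_pos.mpr (by positivity)
  rw [hδ, iInf_lt_iff] at hlt
  obtain ⟨⟨y, hy⟩, hylt⟩ := hlt
  refine ⟨y, hy, ?_⟩
  have hmark := mul_meas_ge_le_lintegral₀ (μ := μ) (hmeas y).aemeasurable (ENNReal.ofReal e)
  have hseteq : {ω | ENNReal.ofReal e ≤ h y ω} = {ω | e ≤ (f y) ω} := by
    ext ω
    simp only [Set.mem_setOf_eq, hh]
    constructor
    · intro hle
      have h1 := ENNReal.toReal_mono ENNReal.ofReal_ne_top hle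
      rw [ENNReal.toReal_ofReal he.le, ENNReal.toReal_ofReal'] at h1
      rcases le_max_iff.mp h1 with h2 | h2
      · exact (le_min_iff.mp h2).1
      · linarith
    · intro hle
      exact ENNReal.ofReal_le_ofReal (le_min hle le_rfl)
  rw [hseteq] at hmark
  have hIy : ∫⁻ ω, h y ω ∂μ < ENNReal.ofReal e * ENNReal.ofReal l := by
    rw [← ENNReal.ofReal_mul he.le]
    exact hylt
  have hmeas_lt : μ {ω | e ≤ (f y) ω} < ENNReal.ofReal l :=
    (ENNReal.mul_lt_mul_iff_right (by simp [he]) ENNReal.ofReal_ne_top).mp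
      (lt_of_le_of_lt hmark hIy)
  rw [meas_lt_compl]
  have := ENNReal.toReal_lt_of_lt_ofReal hmeas_lt
  linarith

end Meas

section Top
open Filter
variable [IsProbabilityMeasure μ]

/-- The basic `(ε,λ)`-neighbourhood of `x`. -/
def NB (ν : ι → E → Ω →ₘ[μ] ℝ) (x : E) (Q : Finset ι) (hQ : Q.Nonempty) (e l : ℝ) : Set E :=
  {y | (μ {ω | nQ ν Q hQ (y - x) ω < e}).toReal > 1 - l}

lemma elNhd_le_NB (ν : ι → E → Ω →ₘ[μ] ℝ) (x : E) (Q : Finset ι) (hQ : Q.Nonempty)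
    (e l : ℝ) (he : 0 < e) (hl : 0 < l ∧ l < 1) :
    elNhd ν x ≤ 𝓟 (NB ν x Q hQ e l) := by
  rw [elNhd]
  refine iInf_le_of_le ⟨Q, hQ⟩ ?_
  refine iInf_le_of_le ⟨e, he⟩ ?_
  exact iInf_le_of_le ⟨l, hl⟩ le_rfl

lemma NB_subset (ν : ι → E → Ω →ₘ[μ] ℝ) (x : E) (Q Q' : Finset ι) (hQ : Q.Nonempty)
    (hQ' : Q'.Nonempty) (hsub : Q ⊆ Q') (e e' l l' : ℝ) (hee : e' ≤ e) (hll : l' ≤ l) :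
    NB ν x Q' hQ' e' l' ⊆ NB ν x Q hQ e l := by
  intro y hy
  have hmono := le_iff.mp (nQ_mono (ν := ν) Q Q' hQ hQ' hsub (y - x))
  have hsub2 : {ω | nQ ν Q' hQ' (y - x) ω < e'} ≤ᵐ[μ] {ω | nQ ν Q hQ (y - x) ω < e} := by
    filter_upwards [hmono] with ω hω hmem
    exact lt_of_lt_of_le (lt_of_le_of_lt hω hmem) hee
  have h2 := ENNReal.toReal_mono (measure_ne_top μ _) (measure_mono_ae hsub2)
  have hy' : 1 - l' < (μ {ω | nQ ν Q' hQ' (y - x) ω < e'}).toReal := hy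
  show 1 - l < (μ {ω | nQ ν Q hQ (y - x) ω < e}).toReal
  linarith

lemma mem_elNhd [Nonempty ι] (ν : ι → E → Ω →ₘ[μ] ℝ) (x : E) (s : Set E) :
    s ∈ elNhd ν x ↔ ∃ (Q : Finset ι) (hQ : Q.Nonempty) (e l : ℝ),
      0 < e ∧ (0 < l ∧ l < 1) ∧ NB ν x Q hQ e l ⊆ s := by
  classical
  have heq : elNhd ν x = ⨅ p : {Q : Finset ι // Q.Nonempty} × {e : ℝ // 0 < e} ×
      {l : ℝ // 0 < l ∧ l < 1}, 𝓟 (NB ν x p.1.1 p.1.2 p.2.1.1 p.2.2.1) := by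
    simp only [elNhd, NB, iInf_prod]
  have hdir : Directed (· ≥ ·) fun p : {Q : Finset ι // Q.Nonempty} × {e : ℝ // 0 < e} ×
      {l : ℝ // 0 < l ∧ l < 1} => 𝓟 (NB ν x p.1.1 p.1.2 p.2.1.1 p.2.2.1) := by
    rintro ⟨⟨Q1, hQ1⟩, ⟨e1, he1⟩, ⟨l1, hl1⟩⟩ ⟨⟨Q2, hQ2⟩, ⟨e2, he2⟩, ⟨l2, hl2⟩⟩
    have hQu : (Q1 ∪ Q2).Nonempty := by
      obtain ⟨i, hi⟩ := hQ1
      exact ⟨i, Finset.mem_union_left _ hi⟩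
    refine ⟨⟨⟨Q1 ∪ Q2, hQu⟩, ⟨min e1 e2, lt_min he1 he2⟩,
      ⟨min l1 l2, lt_min hl1.1 hl2.1, lt_of_le_of_lt (min_le_left _ _) hl1.2⟩⟩,
      ?_, ?_⟩
    · exact principal_mono.mpr (NB_subset ν x Q1 (Q1 ∪ Q2) hQ1 hQu
        Finset.subset_union_left e1 (min e1 e2) l1 (min l1 l2)
        (min_le_left _ _) (min_le_left _ _))
    · exact principal_mono.mpr (NB_subset ν x Q2 (Q1 ∪ Q2) hQ2 hQu
        Finset.subset_union_right e2 (min e1 e2) l2 (min l1 l2)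
        (min_le_right _ _) (min_le_right _ _))
  haveI : Nonempty ({Q : Finset ι // Q.Nonempty} × {e : ℝ // 0 < e} ×
      {l : ℝ // 0 < l ∧ l < 1}) := by
    refine ⟨⟨⟨{Classical.arbitrary ι}, Finset.singleton_nonempty _⟩, ⟨1, one_pos⟩,
      ⟨1/2, by norm_num, by norm_num⟩⟩⟩
  rw [heq, mem_iInf_of_directed hdir]
  constructor
  · rintro ⟨⟨⟨Q, hQ⟩, ⟨e, he⟩, ⟨l, hl⟩⟩, hmem⟩
    exact ⟨Q, hQ, e, l, he, hl, mem_principal.mp hmem⟩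
  · rintro ⟨Q, hQ, e, l, he, hl, hsub⟩
    exact ⟨⟨⟨Q, hQ⟩, ⟨e, he⟩, ⟨l, hl⟩⟩, mem_principal.mpr hsub⟩

lemma mem_NB_self (hν : IsRLCModule 𝕜 ν) (z : E) (Q : Finset ι) (hQ : Q.Nonempty)
    (e l : ℝ) (he : 0 < e) (hl0 : 0 < l) : z ∈ NB ν z Q hQ e l := by
  show 1 - l < (μ {ω | nQ ν Q hQ (z - z) ω < e}).toReal
  have h0 : nQ ν Q hQ (z - z) = 0 := by rw [sub_self]; exact nQ_zero hν Q hQ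
  rw [h0]
  have h1 : μ {ω | ((0 : Ω →ₘ[μ] ℝ) : Ω → ℝ) ω < e} = 1 := by
    refine le_antisymm prob_le_one ?_
    refine le_trans (le_of_eq (measure_univ (μ := μ)).symm) (measure_mono_ae ?_)
    filter_upwards [AEEqFun.coeFn_zero (β := ℝ) (μ := μ)] with ω h
    intro _
    show ((0 : Ω →ₘ[μ] ℝ) : Ω → ℝ) ω < e
    rw [h]
    simpa using he
  rw [h1]
  simp only [ENNReal.toReal_one]
  linarith

lemma NB_triangle (hν : IsRLCModule 𝕜 ν) (a y z : E) (Q : Finset ι) (hQ : Q.Nonempty)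
    (e l : ℝ) (hy : y ∈ NB ν a Q hQ (e/2) (l/2)) (hz : z ∈ NB ν y Q hQ (e/2) (l/2)) :
    z ∈ NB ν a Q hQ e l := by
  have htri : nQ ν Q hQ (z - a) ≤ nQ ν Q hQ (z - y) + nQ ν Q hQ (y - a) := by
    have heq : z - a = (z - y) + (y - a) := by abel
    rw [heq]
    exact nQ_add_le hν Q hQ _ _
  set S1 := {ω | nQ ν Q hQ (z - y) ω < e/2} with hS1
  set S2 := {ω | nQ ν Q hQ (y - a) ω < e/2} with hS2
  set S := {ω | nQ ν Q hQ (z - a) ω < e} with hS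
  have hsub : (S1 ∩ S2 : Set Ω) ≤ᵐ[μ] S := by
    filter_upwards [le_iff.mp htri,
      AEEqFun.coeFn_add (nQ ν Q hQ (z - y)) (nQ ν Q hQ (y - a))] with ω h1 h2
    rintro ⟨hω1, hω2⟩
    show nQ ν Q hQ (z - a) ω < e
    rw [h2, Pi.add_apply] at h1
    have hω1' : nQ ν Q hQ (z - y) ω < e/2 := hω1
    have hω2' : nQ ν Q hQ (y - a) ω < e/2 := hω2
    linarith
  have hm1 : MeasurableSet S1 := measurableSet_lt (nQ ν Q hQ (z - y)).measurable measurable_const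
  have hm2 : MeasurableSet S2 := measurableSet_lt (nQ ν Q hQ (y - a)).measurable measurable_const
  have hui : μ (S1 ∪ S2) + μ (S1 ∩ S2) = μ S1 + μ S2 := measure_union_add_inter S1 hm2
  have htoReal : (μ (S1 ∪ S2)).toReal + (μ (S1 ∩ S2)).toReal
      = (μ S1).toReal + (μ S2).toReal := by
    rw [← ENNReal.toReal_add (measure_ne_top μ _) (measure_ne_top μ _),
      ← ENNReal.toReal_add (measure_ne_top μ _) (measure_ne_top μ _), hui]
  have hle1 : (μ (S1 ∪ S2)).toReal ≤ 1 := by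
    have := ENNReal.toReal_mono ENNReal.one_ne_top (prob_le_one (μ := μ) (s := S1 ∪ S2))
    simpa using this
  have hSge : (μ (S1 ∩ S2)).toReal ≤ (μ S).toReal :=
    ENNReal.toReal_mono (measure_ne_top μ _) (measure_mono_ae hsub)
  have hy' : 1 - l/2 < (μ S2).toReal := hy
  have hz' : 1 - l/2 < (μ S1).toReal := hz
  show 1 - l < (μ S).toReal
  linarith

lemma nhds_elTop [Nonempty ι] (hν : IsRLCModule 𝕜 ν) (x : E) :
    @nhds E (elTop ν) x = elNhd ν x := by
  rw [elTop]
  refine TopologicalSpace.nhds_mkOfNhds _ _ ?_ ?_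
  · intro z s hs
    rw [mem_elNhd] at hs
    obtain ⟨Q, hQ, e, l, he, hl, hsub⟩ := hs
    exact hsub (mem_NB_self hν z Q hQ e l he hl.1)
  · intro a s hs
    rw [mem_elNhd] at hs
    obtain ⟨Q, hQ, e, l, he, ⟨hl0, hl1⟩, hsub⟩ := hs
    have hmem : NB ν a Q hQ (e/2) (l/2) ∈ elNhd ν a :=
      le_principal_iff.mp (elNhd_le_NB ν a Q hQ (e/2) (l/2) (by linarith)
        ⟨by linarith, by linarith⟩)
    refine Filter.mem_of_superset hmem ?_
    intro y hy
    have hmem2 : NB ν y Q hQ (e/2) (l/2) ∈ elNhd ν y :=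
      le_principal_iff.mp (elNhd_le_NB ν y Q hQ (e/2) (l/2) (by linarith)
        ⟨by linarith, by linarith⟩)
    refine Filter.mem_of_superset hmem2 ?_
    intro z hz
    exact hsub (NB_triangle hν a y z Q hQ e l hy hz)

end Top

end ELAux
end Aux

/-- **Lemma 3.14 (3).** Let `(E,P)` be a random locally convex module, `x ∈ E` and `G ⊆ E`
a nonempty subset satisfying `1_A·y + 1_{Aᶜ}·z ∈ G` for all `A ∈ F` and `y, z ∈ G`. Then `x`
lies in the closure of `G` in the `(ε,λ)`-topology iff `d*(x,G) = 0` (equivalently, since all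
`d*_Q(x,G)` are nonnegative, iff `0` is the greatest lower bound of `{‖x−y‖_Q : y ∈ G}` for
every finite nonempty `Q ⊆ P`). -/
theorem mem_elClosure_iff_dStar_eq_zero {Ω : Type*} [MeasurableSpace Ω] {μ : Measure Ω}
    [IsProbabilityMeasure μ] {𝕜 : Type*} [RCLike 𝕜] {E : Type*} [AddCommGroup E]
    [Module (Ω →ₘ[μ] 𝕜) E] {ι : Type*} (ν : ι → E → Ω →ₘ[μ] ℝ) (hν : IsRLCModule 𝕜 ν)
    (x : E) (G : Set E) (hG : G.Nonempty)
    (hGstab : ∀ (A : Set Ω) (hA : MeasurableSet A) (y z : E), y ∈ G → z ∈ G →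
      L0.ind μ 𝕜 A hA • y + L0.ind μ 𝕜 Aᶜ hA.compl • z ∈ G) :
    x ∈ @closure E (elTop ν) G ↔
      ∀ (Q : Finset ι) (hQ : Q.Nonempty),
        IsGLB {c | ∃ y ∈ G, c = nQ ν Q hQ (x - y)} 0 := by
  classical
  rcases isEmpty_or_nonempty ι with hι | hι
  · -- degenerate case: no seminorms
    have htop : ∀ z : E, elNhd ν z = ⊤ := by
      intro z
      rw [elNhd]
      haveI : IsEmpty {Q : Finset ι // Q.Nonempty} := ⟨fun p => by
        obtain ⟨i, _⟩ := p.2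
        exact IsEmpty.false i⟩
      exact iInf_of_empty _
    have h0 : ∀ z : E, ∀ s ∈ elNhd ν z, s ∈ (pure z : Filter E) := by
      intro z s hs
      rw [htop z, Filter.mem_top] at hs
      subst hs
      rw [Filter.mem_pure]
      exact Set.mem_univ z
    have h1 : ∀ z : E, ∀ s ∈ elNhd ν z, ∀ᶠ y in elNhd ν z, s ∈ elNhd ν y := by
      intro z s hs
      refine Filter.Eventually.of_forall fun y => ?_
      rw [htop z, Filter.mem_top] at hs
      subst hs
      rw [htop y]
      exact Filter.univ_mem
    constructor
    · intro _ Q hQ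
      obtain ⟨i, _⟩ := hQ
      exact absurd trivial (fun _ => IsEmpty.false i)
    · intro _
      have hiff : x ∈ @closure E (elTop ν) G ↔
          ∀ t ∈ @nhds E (elTop ν) x, (t ∩ G).Nonempty := by
        letI := elTop ν
        exact mem_closure_iff_nhds
      rw [hiff]
      intro t ht
      rw [elTop, TopologicalSpace.nhds_mkOfNhds (elNhd ν) x (fun z => Filter.le_def.mpr (h0 z)) h1,
        htop x, Filter.mem_top] at ht
      subst ht
      obtain ⟨y0, hy0⟩ := hG
      exact ⟨y0, Set.mem_univ _, hy0⟩
  · have hnh : ∀ z : E, @nhds E (elTop ν) z = elNhd ν z := fun z => ELAux.nhds_elTop hν z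
    have hiff : x ∈ @closure E (elTop ν) G ↔
        ∀ t ∈ @nhds E (elTop ν) x, (t ∩ G).Nonempty := by
      letI := elTop ν
      exact mem_closure_iff_nhds
    rw [hiff]
    constructor
    · intro hcl Q hQ
      constructor
      · rintro g ⟨y, hy, rfl⟩
        exact ELAux.nQ_nonneg hν Q hQ (x - y)
      · intro c hc
        refine ELAux.nonpos_of_meas c ?_
        intro e l he hl0 hl1
        have hNBmem : ELAux.NB ν x Q hQ e l ∈ @nhds E (elTop ν) x := by
          rw [hnh x]
          exact Filter.le_principal_iff.mp (ELAux.elNhd_le_NB ν x Q hQ e l he ⟨hl0, hl1⟩)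
        obtain ⟨y, hyN, hyG⟩ := hcl _ hNBmem
        have hflip : nQ ν Q hQ (y - x) = nQ ν Q hQ (x - y) := by
          rw [← ELAux.nQ_neg hν Q hQ (x - y), neg_sub]
        have hyN' : 1 - l < (μ {ω | nQ ν Q hQ (x - y) ω < e}).toReal := by
          have h3 : 1 - l < (μ {ω | nQ ν Q hQ (y - x) ω < e}).toReal := hyN
          rwa [hflip] at h3
        have hcle : c ≤ nQ ν Q hQ (x - y) := hc ⟨y, hyG, rfl⟩
        have hsub : ({ω | nQ ν Q hQ (x - y) ω < e} : Set Ω) ≤ᵐ[μ] {ω | c ω < e} := by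
          filter_upwards [ELAux.le_iff.mp hcle] with ω h1 h2
          exact lt_of_le_of_lt h1 h2
        have h2 := ENNReal.toReal_mono (measure_ne_top μ _) (measure_mono_ae hsub)
        linarith
    · intro hglb t ht
      rw [hnh x, ELAux.mem_elNhd] at ht
      obtain ⟨Q, hQ, e, l, he, ⟨hl0, hl1⟩, hsub⟩ := ht
      obtain ⟨y, hyG, hylt⟩ := ELAux.exists_meas_lt (fun y => nQ ν Q hQ (x - y)) hG
        (fun y _ => ELAux.nQ_nonneg hν Q hQ _)
        (fun y hy z hz => ELAux.exists_comb hν x hGstab hy hz Q hQ)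
        (hglb Q hQ) e l he hl0 hl1
      refine ⟨y, hsub ?_, hyG⟩
      show 1 - l < (μ {ω | nQ ν Q hQ (y - x) ω < e}).toReal
      have hflip : nQ ν Q hQ (y - x) = nQ ν Q hQ (x - y) := by
        rw [← ELAux.nQ_neg hν Q hQ (x - y), neg_sub]
      rw [hflip]
      exact hylt
end

section
/- Let (E,P) be a random locally convex module, x ∈ E, and G ⊆ E a nonempty subset having the countable concatenation property. Then the following are equivalent: (1) x is in the T_c-closure of G; (2) x is in the (ε,λ)-topology closure of G; (3) d*(x,G) = 0. In particular, a subset of E with the countable concatenation property is T_c-closed if and only if it is closed in the (ε,λ)-topology. -/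
open MeasureTheory

section Helpers
open Filter
variable {Ω : Type*} [MeasurableSpace Ω] {μ : Measure Ω}
  {𝕜 : Type*} [RCLike 𝕜] {E : Type*} [AddCommGroup E] [Module (Ω →ₘ[μ] 𝕜) E]
  {ι : Type*} {ν : ι → E → Ω →ₘ[μ] ℝ}

lemma nQ_coe (Q : Finset ι) (hQ : Q.Nonempty) (x : E) :
    ∀ᵐ ω ∂μ, (nQ ν Q hQ x : Ω → ℝ) ω = Q.sup' hQ (fun i => (ν i x : Ω → ℝ) ω) := by
  induction hQ using Finset.Nonempty.cons_induction with
  | singleton a => simp [nQ]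
  | cons a s h hs ih =>
      have h1 : nQ ν (Finset.cons a s h) (Finset.cons_nonempty h) x
          = ν a x ⊔ nQ ν s hs x := Finset.sup'_cons hs _
      rw [h1]
      filter_upwards [AEEqFun.coeFn_sup (ν a x) (nQ ν s hs x), ih] with ω h2 h3
      rw [h2, Finset.sup'_cons hs, ← h3]

variable (hν : IsRLCModule 𝕜 ν)
include hν

lemma nu_zero (i : ι) : ν i (0 : E) = 0 := by
  have h := hν.smul i 0 (0 : E)
  rw [zero_smul] at h
  refine AEEqFun.ext ?_
  rw [h]
  filter_upwards [AEEqFun.coeFn_mul (L0.abs (0 : Ω →ₘ[μ] 𝕜)) (ν i (0:E)),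
    AEEqFun.coeFn_comp (fun z : 𝕜 => ‖z‖) continuous_norm (0 : Ω →ₘ[μ] 𝕜),
    AEEqFun.coeFn_zero (β := 𝕜) (μ := μ), AEEqFun.coeFn_zero (β := ℝ) (μ := μ)] with ω h1 h2 h3 h4
  rw [h1, h4]
  show (L0.abs (0 : Ω →ₘ[μ] 𝕜)) ω * _ = 0
  rw [show (L0.abs (0 : Ω →ₘ[μ] 𝕜)) ω = ((fun z : 𝕜 => ‖z‖) ∘ (0 : Ω →ₘ[μ] 𝕜)) ω from h2]
  simp [h3]

lemma nu_neg (i : ι) (x : E) : ν i (-x) = ν i x := by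
  have h : -x = (-1 : Ω →ₘ[μ] 𝕜) • x := (neg_one_smul _ x).symm
  rw [h, hν.smul]
  refine AEEqFun.ext ?_
  filter_upwards [AEEqFun.coeFn_mul (L0.abs (-1 : Ω →ₘ[μ] 𝕜)) (ν i x),
    AEEqFun.coeFn_comp (fun z : 𝕜 => ‖z‖) continuous_norm (-1 : Ω →ₘ[μ] 𝕜),
    AEEqFun.coeFn_neg (1 : Ω →ₘ[μ] 𝕜), AEEqFun.coeFn_one (β := 𝕜) (μ := μ)] with ω h1 h2 h3 h4
  rw [h1, Pi.mul_apply]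
  have h5 : (L0.abs (-1 : Ω →ₘ[μ] 𝕜)) ω = ‖(-1 : Ω →ₘ[μ] 𝕜) ω‖ := h2
  rw [h5, h3, Pi.neg_apply, h4, Pi.one_apply]
  simp

lemma nQ_neg (Q : Finset ι) (hQ : Q.Nonempty) (x y : E) :
    nQ ν Q hQ (x - y) = nQ ν Q hQ (y - x) := by
  refine Finset.sup'_congr hQ rfl (fun i _ => ?_)
  rw [show x - y = -(y - x) by abel, nu_neg hν]

lemma nQ_nonneg_ae (Q : Finset ι) (hQ : Q.Nonempty) (x : E) :
    ∀ᵐ ω ∂μ, 0 ≤ (nQ ν Q hQ x : Ω → ℝ) ω := by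
  obtain ⟨i₀, hi₀⟩ := id hQ
  have h0 : ∀ᵐ ω ∂μ, 0 ≤ (ν i₀ x : Ω → ℝ) ω := by
    filter_upwards [AEEqFun.coeFn_le.2 (hν.nonneg i₀ x), AEEqFun.coeFn_zero (β := ℝ) (μ := μ)]
      with ω h1 h2
    exact le_trans (le_of_eq h2.symm) h1
  filter_upwards [nQ_coe Q hQ x, h0] with ω h1 h2
  rw [h1]
  exact le_trans h2 (Finset.le_sup' (fun i => (ν i x : Ω → ℝ) ω) hi₀)

lemma nQ_triangle_ae (Q : Finset ι) (hQ : Q.Nonempty) (u v : E) :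
    ∀ᵐ ω ∂μ, (nQ ν Q hQ (u + v) : Ω → ℝ) ω
      ≤ (nQ ν Q hQ u : Ω → ℝ) ω + (nQ ν Q hQ v : Ω → ℝ) ω := by
  have hall : ∀ᵐ ω ∂μ, ∀ i ∈ Q, (ν i (u+v) : Ω → ℝ) ω ≤ (ν i u : Ω → ℝ) ω + (ν i v : Ω → ℝ) ω := by
    rw [Finset.eventually_all]
    intro i _
    filter_upwards [AEEqFun.coeFn_le.2 (hν.add_le i u v), AEEqFun.coeFn_add (ν i u) (ν i v)]
      with ω h1 h2
    calc (ν i (u+v) : Ω → ℝ) ω ≤ (ν i u + ν i v : Ω →ₘ[μ] ℝ) ω := h1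
    _ = (ν i u : Ω → ℝ) ω + (ν i v : Ω → ℝ) ω := by rw [h2]; rfl
  filter_upwards [nQ_coe Q hQ (u+v), nQ_coe Q hQ u, nQ_coe Q hQ v, hall] with ω h1 h2 h3 h4
  rw [h1, h2, h3]
  refine Finset.sup'_le hQ _ (fun i hi => ?_)
  exact le_trans (h4 i hi) (add_le_add (Finset.le_sup' (fun i => (ν i u : Ω → ℝ) ω) hi)
    (Finset.le_sup' (fun i => (ν i v : Ω → ℝ) ω) hi))

lemma ind_smul_eq_ae {B : Set Ω} (hB : MeasurableSet B) {u v : E}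
    (h : L0.ind μ 𝕜 B hB • u = L0.ind μ 𝕜 B hB • v) (i : ι) :
    ∀ᵐ ω ∂μ, ω ∈ B → (ν i u : Ω → ℝ) ω = (ν i v : Ω → ℝ) ω := by
  have h2 : L0.abs (L0.ind μ 𝕜 B hB) * ν i u = L0.abs (L0.ind μ 𝕜 B hB) * ν i v := by
    rw [← hν.smul, ← hν.smul, h]
  have h3 : ∀ᵐ ω ∂μ, (L0.abs (L0.ind μ 𝕜 B hB) : Ω → ℝ) ω = B.indicator (fun _ => (1:ℝ)) ω := by
    filter_upwards [AEEqFun.coeFn_comp (fun z : 𝕜 => ‖z‖) continuous_norm (L0.ind μ 𝕜 B hB),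
      AEEqFun.coeFn_mk (B.indicator fun _ => (1 : 𝕜))
        ((stronglyMeasurable_const.indicator hB).aestronglyMeasurable)] with ω h4 h5
    have : (L0.abs (L0.ind μ 𝕜 B hB)) ω = ‖(L0.ind μ 𝕜 B hB) ω‖ := h4
    rw [this, show (L0.ind μ 𝕜 B hB) ω = B.indicator (fun _ => (1:𝕜)) ω from h5]
    by_cases hω : ω ∈ B <;> simp [hω]
  have h4 : ∀ᵐ ω ∂μ, (L0.abs (L0.ind μ 𝕜 B hB) : Ω → ℝ) ω * (ν i u : Ω → ℝ) ω
      = (L0.abs (L0.ind μ 𝕜 B hB) : Ω → ℝ) ω * (ν i v : Ω → ℝ) ω := by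
    filter_upwards [AEEqFun.coeFn_mul (L0.abs (L0.ind μ 𝕜 B hB)) (ν i u),
      AEEqFun.coeFn_mul (L0.abs (L0.ind μ 𝕜 B hB)) (ν i v)] with ω hu hv
    calc _ = (L0.abs (L0.ind μ 𝕜 B hB) * ν i u : Ω →ₘ[μ] ℝ) ω := (hu).symm
      _ = (L0.abs (L0.ind μ 𝕜 B hB) * ν i v : Ω →ₘ[μ] ℝ) ω := by rw [h2]
      _ = _ := hv
  filter_upwards [h3, h4] with ω h3 h4 hω
  rw [h3] at h4
  simpa [hω] using h4

end Helpers

section Closure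
open Filter
set_option maxHeartbeats 1000000
set_option linter.unusedSectionVars false
variable {Ω : Type*} [MeasurableSpace Ω] {μ : Measure Ω} [IsProbabilityMeasure μ]
  {𝕜 : Type*} [RCLike 𝕜] {E : Type*} [AddCommGroup E] [Module (Ω →ₘ[μ] 𝕜) E]
  {ι : Type*} {ν : ι → E → Ω →ₘ[μ] ℝ}

lemma strPos_half {ε : Ω →ₘ[μ] ℝ} (hε : L0.StrPos ε) : L0.StrPos (((2:ℝ)⁻¹) • ε) := by
  filter_upwards [hε, AEEqFun.coeFn_smul ((2:ℝ)⁻¹) ε] with ω h1 h2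
  rw [h2]; simp only [Pi.smul_apply, smul_eq_mul]; positivity

lemma half_add_half {ε : Ω →ₘ[μ] ℝ} :
    ∀ᵐ ω ∂μ, (((2:ℝ)⁻¹ • ε : Ω →ₘ[μ] ℝ) : Ω → ℝ) ω + (((2:ℝ)⁻¹ • ε : Ω →ₘ[μ] ℝ) : Ω → ℝ) ω
      = (ε : Ω → ℝ) ω := by
  filter_upwards [AEEqFun.coeFn_smul ((2:ℝ)⁻¹) ε] with ω h2
  rw [h2]; simp only [Pi.smul_apply, smul_eq_mul]; ring

variable (hν : IsRLCModule 𝕜 ν)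
include hν

lemma nQ_zero_ae (Q : Finset ι) (hQ : Q.Nonempty) :
    ∀ᵐ ω ∂μ, (nQ ν Q hQ (0 : E) : Ω → ℝ) ω = 0 := by
  have hall : ∀ᵐ ω ∂μ, ∀ i ∈ Q, (ν i (0:E) : Ω → ℝ) ω = (0:ℝ) := by
    rw [Finset.eventually_all]
    intro i _
    rw [nu_zero hν i]
    filter_upwards [AEEqFun.coeFn_zero (β := ℝ) (μ := μ)] with ω h
    exact h
  filter_upwards [nQ_coe Q hQ (0 : E), hall] with ω h1 h2
  rw [h1]
  rw [Finset.sup'_congr hQ rfl (fun i hi => h2 i hi), Finset.sup'_const]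

lemma mem_tcClosure (x : E) (G : Set E) (hG : G.Nonempty) :
    x ∈ @closure E (tcTop ν) G ↔
      ∀ (Q : Finset ι) (hQ : Q.Nonempty) (ε : Ω →ₘ[μ] ℝ), L0.StrPos ε →
        ∃ y ∈ G, nQ ν Q hQ (y - x) ≤ ε := by
  classical
  letI := tcTop ν
  constructor
  · intro hx Q hQ ε hε
    by_contra hcon
    push_neg at hcon
    set U : Set E := {z | ∃ δ : Ω →ₘ[μ] ℝ, L0.StrPos δ ∧
      ∀ y, nQ ν Q hQ (y - z) ≤ δ → y ∉ G} with hU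
    have hxU : x ∈ U := ⟨ε, hε, fun y h hyG => hcon y hyG h⟩
    have hUopen : IsOpen U := by
      show ∀ a ∈ U, U ∈ tcNhd ν a
      rintro a ⟨δ, hδ, hball⟩
      have hle : tcNhd ν a ≤ Filter.principal {y | nQ ν Q hQ (y - a) ≤ ((2:ℝ)⁻¹) • δ} := by
        rw [tcNhd]
        exact le_trans (iInf_le _ (⟨Q, hQ⟩ : {Q : Finset ι // Q.Nonempty}))
          (iInf_le _ (⟨((2:ℝ)⁻¹) • δ, strPos_half hδ⟩ : {ε : Ω →ₘ[μ] ℝ // L0.StrPos ε}))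
      refine hle ?_
      rw [Filter.mem_principal]
      intro z hz
      refine ⟨((2:ℝ)⁻¹) • δ, strPos_half hδ, fun y hy => hball y ?_⟩
      rw [← AEEqFun.coeFn_le]
      have htri := nQ_triangle_ae hν Q hQ (y - z) (z - a)
      rw [show (y - z) + (z - a) = y - a by abel] at htri
      filter_upwards [htri, AEEqFun.coeFn_le.2 hy, AEEqFun.coeFn_le.2 hz,
        half_add_half (ε := δ)] with ω h1 h2 h3 h4
      calc (nQ ν Q hQ (y - a) : Ω → ℝ) ω
          ≤ (nQ ν Q hQ (y - z) : Ω → ℝ) ω + (nQ ν Q hQ (z - a) : Ω → ℝ) ω := h1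
        _ ≤ (((2:ℝ)⁻¹ • δ : Ω →ₘ[μ] ℝ) : Ω → ℝ) ω + (((2:ℝ)⁻¹ • δ : Ω →ₘ[μ] ℝ) : Ω → ℝ) ω :=
            add_le_add h2 h3
        _ = (δ : Ω → ℝ) ω := h4
    obtain ⟨y, hyU, hyG⟩ := mem_closure_iff.1 hx U hUopen hxU
    obtain ⟨δ, hδ, hball⟩ := hyU
    refine hball y ?_ hyG
    rw [← AEEqFun.coeFn_le]
    have : y - y = (0 : E) := by abel
    rw [this]
    filter_upwards [nQ_zero_ae hν Q hQ, hδ] with ω h1 h2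
    rw [h1]; exact le_of_lt h2
  · intro hnear
    rw [mem_closure_iff]
    intro o ho hxo
    have ho' : o ∈ tcNhd ν x := ho x hxo
    rcases isEmpty_or_nonempty {Q : Finset ι // Q.Nonempty} with hemp | hne
    · have htop : tcNhd ν x = ⊤ := by
        rw [tcNhd]; exact iInf_of_empty _
      rw [htop, Filter.mem_top] at ho'
      subst ho'
      obtain ⟨y, hy⟩ := hG
      exact ⟨y, trivial, hy⟩
    · have hrw : tcNhd ν x
          = ⨅ p : {Q : Finset ι // Q.Nonempty} × {ε : Ω →ₘ[μ] ℝ // L0.StrPos ε},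
            Filter.principal {y | nQ ν p.1.1 p.1.2 (y - x) ≤ p.2.1} := by
        rw [tcNhd, iInf_prod]
      haveI : Nonempty {ε : Ω →ₘ[μ] ℝ // L0.StrPos ε} := ⟨⟨1, by
        filter_upwards [AEEqFun.coeFn_one (β := ℝ) (μ := μ)] with ω h1
        rw [h1]; norm_num⟩⟩
      have hdir : Directed (· ≥ ·) fun p : {Q : Finset ι // Q.Nonempty} × {ε : Ω →ₘ[μ] ℝ // L0.StrPos ε} =>
          Filter.principal {y | nQ ν p.1.1 p.1.2 (y - x) ≤ p.2.1} := by
        rintro ⟨⟨Q₁, hQ₁⟩, ⟨ε₁, hε₁⟩⟩ ⟨⟨Q₂, hQ₂⟩, ⟨ε₂, hε₂⟩⟩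
        refine ⟨⟨⟨Q₁ ∪ Q₂, Finset.Nonempty.mono Finset.subset_union_left hQ₁⟩,
          ⟨ε₁ ⊓ ε₂, ?_⟩⟩, ?_, ?_⟩
        · filter_upwards [hε₁, hε₂, AEEqFun.coeFn_inf ε₁ ε₂] with ω h1 h2 h3
          rw [h3]; exact lt_min h1 h2
        · refine Filter.principal_mono.2 (fun y hy => ?_)
          exact le_trans (le_trans
            (Finset.sup'_mono (fun i => ν i (y - x)) Finset.subset_union_left hQ₁) hy)
            inf_le_left
        · refine Filter.principal_mono.2 (fun y hy => ?_)
          exact le_trans (le_trans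
            (Finset.sup'_mono (fun i => ν i (y - x)) Finset.subset_union_right hQ₂) hy)
            inf_le_right
      rw [hrw] at ho'
      obtain ⟨⟨⟨Q, hQ⟩, ⟨ε, hε⟩⟩, hsub⟩ := (Filter.mem_iInf_of_directed hdir o).1 ho'
      rw [Filter.mem_principal] at hsub
      obtain ⟨y, hyG, hy⟩ := hnear Q hQ ε hε
      exact ⟨y, hsub hy, hyG⟩

end Closure

section ElClosure
open Filter
set_option linter.unusedSectionVars false
set_option maxHeartbeats 4000000
variable {Ω : Type*} [MeasurableSpace Ω] {μ : Measure Ω} [IsProbabilityMeasure μ]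
  {𝕜 : Type*} [RCLike 𝕜] {E : Type*} [AddCommGroup E] [Module (Ω →ₘ[μ] 𝕜) E]
  {ι : Type*} {ν : ι → E → Ω →ₘ[μ] ℝ}

lemma compl_toReal {S : Set Ω} (hS : MeasurableSet S) :
    (μ Sᶜ).toReal = 1 - (μ S).toReal := by
  rw [prob_compl_eq_one_sub hS, ENNReal.toReal_sub_of_le prob_le_one ENNReal.one_ne_top,
    ENNReal.toReal_one]

lemma toReal_mono_meas {S T : Set Ω} (h : μ S ≤ μ T) : (μ S).toReal ≤ (μ T).toReal :=
  ENNReal.toReal_mono (measure_ne_top μ T) h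

lemma toReal_full {S : Set Ω} (h : ∀ᵐ ω ∂μ, ω ∈ S) : (μ S).toReal = 1 := by
  have : μ S = μ Set.univ :=
    measure_congr (by filter_upwards [h] with ω hω; exact propext (iff_of_true hω trivial))
  rw [this, measure_univ, ENNReal.toReal_one]

lemma meas_mono_of_ae_imp {s t : Set Ω} (h : ∀ᵐ ω ∂μ, ω ∈ s → ω ∈ t) : μ s ≤ μ t := by
  have hst : s \ t = {ω | ¬(ω ∈ s → ω ∈ t)} := by
    ext ω; simp [Set.mem_diff, Classical.not_imp]
  have h0 : μ (s \ t) = 0 := by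
    rw [hst]; exact ae_iff.1 h
  calc μ s = μ (s \ t ∪ s ∩ t) := by rw [Set.diff_union_inter]
    _ ≤ μ (s \ t) + μ (s ∩ t) := measure_union_le _ _
    _ = μ (s ∩ t) := by rw [h0, zero_add]
    _ ≤ μ t := measure_mono Set.inter_subset_right

lemma inter_toReal_gt {S T : Set Ω} (hS : MeasurableSet S) (hT : MeasurableSet T) {a b : ℝ}
    (ha : 1 - a < (μ S).toReal) (hb : 1 - b < (μ T).toReal) :
    1 - (a + b) < (μ (S ∩ T)).toReal := by
  have h1 : (μ (S ∩ T)ᶜ).toReal ≤ (μ Sᶜ).toReal + (μ Tᶜ).toReal := by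
    have h0 : μ ((S ∩ T)ᶜ) ≤ μ Sᶜ + μ Tᶜ := by
      rw [Set.compl_inter]; exact measure_union_le _ _
    rw [← ENNReal.toReal_add (measure_ne_top μ _) (measure_ne_top μ _)]
    exact ENNReal.toReal_mono
      (ENNReal.add_ne_top.2 ⟨measure_ne_top μ _, measure_ne_top μ _⟩) h0
  rw [compl_toReal (hS.inter hT)] at h1
  rw [compl_toReal hS, compl_toReal hT] at h1
  linarith

lemma elball_meas (Q : Finset ι) (hQ : Q.Nonempty) (u : E) (e : ℝ) :
    MeasurableSet {ω | (nQ ν Q hQ u : Ω → ℝ) ω < e} :=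
  measurableSet_lt (AEEqFun.stronglyMeasurable _).measurable measurable_const

lemma elNhd_mem (a : E) (Q : Finset ι) (hQ : Q.Nonempty) (e l : ℝ)
    (he : 0 < e) (hl : 0 < l) (hl1 : l < 1) :
    {y : E | (μ {ω | (nQ ν Q hQ (y - a) : Ω → ℝ) ω < e}).toReal > 1 - l} ∈ elNhd ν a := by
  rw [elNhd]
  refine Filter.mem_iInf_of_mem ⟨Q, hQ⟩ ?_
  refine Filter.mem_iInf_of_mem ⟨e, he⟩ ?_
  refine Filter.mem_iInf_of_mem ⟨l, hl, hl1⟩ ?_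
  exact Filter.mem_principal_self _

variable (hν : IsRLCModule 𝕜 ν)
include hν

lemma mem_elClosure (x : E) (G : Set E) (hG : G.Nonempty) :
    x ∈ @closure E (elTop ν) G ↔
      ∀ (Q : Finset ι) (hQ : Q.Nonempty) (e l : ℝ), 0 < e → 0 < l → l < 1 →
        ∃ y ∈ G, (μ {ω | (nQ ν Q hQ (y - x) : Ω → ℝ) ω < e}).toReal > 1 - l := by
  classical
  letI := elTop ν
  constructor
  · intro hx Q hQ e l he hl hl1
    by_contra hcon
    push_neg at hcon
    set U : Set E := {z | ∃ e' l' : ℝ, 0 < e' ∧ 0 < l' ∧ l' < 1 ∧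
      ∀ y, (μ {ω | (nQ ν Q hQ (y - z) : Ω → ℝ) ω < e'}).toReal > 1 - l' → y ∉ G} with hU
    have hxU : x ∈ U := ⟨e, l, he, hl, hl1, fun y h hyG => absurd h (not_lt.2 (hcon y hyG))⟩
    have hUopen : IsOpen U := by
      show ∀ a ∈ U, U ∈ elNhd ν a
      rintro a ⟨e', l', he', hl', hl1', hball⟩
      refine Filter.mem_of_superset
        (elNhd_mem a Q hQ (e'/2) (l'/2) (by positivity) (by positivity) (by linarith)) ?_
      intro z hz
      try simp only [Set.mem_setOf_eq] at hz
      refine ⟨e'/2, l'/2, by positivity, by positivity, by linarith, fun y hy => hball y ?_⟩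
      have hsub : ∀ᵐ ω ∂μ, ω ∈ ({ω | (nQ ν Q hQ (y - z) : Ω → ℝ) ω < e'/2}
            ∩ {ω | (nQ ν Q hQ (z - a) : Ω → ℝ) ω < e'/2}) →
          ω ∈ {ω | (nQ ν Q hQ (y - a) : Ω → ℝ) ω < e'} := by
        have htri := nQ_triangle_ae hν Q hQ (y - z) (z - a)
        rw [show (y - z) + (z - a) = y - a by abel] at htri
        filter_upwards [htri] with ω h1 hω
        obtain ⟨hω1, hω2⟩ := hω
        simp only [Set.mem_setOf_eq] at hω1 hω2 ⊢
        calc (nQ ν Q hQ (y - a) : Ω → ℝ) ω ≤ _ + _ := h1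
          _ < e'/2 + e'/2 := add_lt_add hω1 hω2
          _ = e' := by ring
      have hint : 1 - (l'/2 + l'/2)
          < (μ ({ω | (nQ ν Q hQ (y - z) : Ω → ℝ) ω < e'/2}
            ∩ {ω | (nQ ν Q hQ (z - a) : Ω → ℝ) ω < e'/2})).toReal :=
        inter_toReal_gt (elball_meas Q hQ _ _) (elball_meas Q hQ _ _) hy hz
      have : 1 - l' < (μ {ω | (nQ ν Q hQ (y - a) : Ω → ℝ) ω < e'}).toReal := by
        refine lt_of_lt_of_le ?_ (toReal_mono_meas (meas_mono_of_ae_imp hsub))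
        calc (1:ℝ) - l' = 1 - (l'/2 + l'/2) := by ring
          _ < _ := hint
      exact this
    obtain ⟨y, hyU, hyG⟩ := mem_closure_iff.1 hx U hUopen hxU
    obtain ⟨e', l', he', hl', hl1', hball⟩ := hyU
    refine hball y ?_ hyG
    have hfull : ∀ᵐ ω ∂μ, ω ∈ {ω | (nQ ν Q hQ (y - y) : Ω → ℝ) ω < e'} := by
      have : y - y = (0 : E) := by abel
      rw [this]
      filter_upwards [nQ_zero_ae hν Q hQ] with ω h1
      simp only [Set.mem_setOf_eq, h1]
      exact he'
    rw [toReal_full hfull]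
    linarith
  · intro hnear
    rw [mem_closure_iff]
    intro o ho hxo
    have ho' : o ∈ elNhd ν x := ho x hxo
    rcases isEmpty_or_nonempty {Q : Finset ι // Q.Nonempty} with hemp | hne
    · have htop : elNhd ν x = ⊤ := by
        rw [elNhd]; exact iInf_of_empty _
      rw [htop, Filter.mem_top] at ho'
      subst ho'
      obtain ⟨y, hy⟩ := hG
      exact ⟨y, trivial, hy⟩
    · have hrw : elNhd ν x
          = ⨅ p : {Q : Finset ι // Q.Nonempty} × {e : ℝ // 0 < e} × {l : ℝ // 0 < l ∧ l < 1},
            Filter.principal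
              {y | (μ {ω | (nQ ν p.1.1 p.1.2 (y - x) : Ω → ℝ) ω < p.2.1.1}).toReal
                > 1 - p.2.2.1} := by
        have hgen : ∀ g : {Q : Finset ι // Q.Nonempty} → {e : ℝ // 0 < e} →
            {l : ℝ // 0 < l ∧ l < 1} → Filter E,
            (⨅ Q, ⨅ e, ⨅ l, g Q e l)
              = ⨅ p : {Q : Finset ι // Q.Nonempty} × {e : ℝ // 0 < e} ×
                  {l : ℝ // 0 < l ∧ l < 1}, g p.1 p.2.1 p.2.2 := by
          intro g
          rw [iInf_prod]
          exact iInf_congr fun Q => by rw [iInf_prod]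
        rw [elNhd]
        exact hgen _
      haveI : Nonempty {e : ℝ // 0 < e} := ⟨⟨1, one_pos⟩⟩
      haveI : Nonempty {l : ℝ // 0 < l ∧ l < 1} := ⟨⟨1/2, by norm_num⟩⟩
      have hdir : Directed (· ≥ ·) fun p :
          {Q : Finset ι // Q.Nonempty} × {e : ℝ // 0 < e} × {l : ℝ // 0 < l ∧ l < 1} =>
          Filter.principal
            {y | (μ {ω | (nQ ν p.1.1 p.1.2 (y - x) : Ω → ℝ) ω < p.2.1.1}).toReal
              > 1 - p.2.2.1} := by
        rintro ⟨⟨Q₁, hQ₁⟩, ⟨e₁, he₁⟩, ⟨l₁, hl₁⟩⟩ ⟨⟨Q₂, hQ₂⟩, ⟨e₂, he₂⟩, ⟨l₂, hl₂⟩⟩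
        refine ⟨⟨⟨Q₁ ∪ Q₂, Finset.Nonempty.mono Finset.subset_union_left hQ₁⟩,
          ⟨min e₁ e₂, lt_min he₁ he₂⟩,
          ⟨min l₁ l₂, ⟨lt_min hl₁.1 hl₂.1, lt_of_le_of_lt (min_le_left _ _) hl₁.2⟩⟩⟩, ?_, ?_⟩
        · refine Filter.principal_mono.2 (fun y hy => ?_)
          try simp only [Set.mem_setOf_eq] at hy ⊢
          have hmono : ∀ᵐ ω ∂μ,
              ω ∈ {ω | (nQ ν (Q₁ ∪ Q₂) (Finset.Nonempty.mono Finset.subset_union_left hQ₁)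
                  (y - x) : Ω → ℝ) ω < min e₁ e₂} →
              ω ∈ {ω | (nQ ν Q₁ hQ₁ (y - x) : Ω → ℝ) ω < e₁} := by
            filter_upwards [AEEqFun.coeFn_le.2
              (Finset.sup'_mono (fun i => ν i (y - x)) Finset.subset_union_left hQ₁)]
              with ω h1 hω
            try simp only [Set.mem_setOf_eq] at hω ⊢
            exact lt_of_lt_of_le (lt_of_le_of_lt h1 hω) (min_le_left _ _)
          calc (1:ℝ) - l₁ ≤ 1 - min l₁ l₂ := by
                have := min_le_left l₁ l₂; linarith
            _ < _ := hy
            _ ≤ _ := toReal_mono_meas (meas_mono_of_ae_imp hmono)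
        · refine Filter.principal_mono.2 (fun y hy => ?_)
          try simp only [Set.mem_setOf_eq] at hy ⊢
          have hmono : ∀ᵐ ω ∂μ,
              ω ∈ {ω | (nQ ν (Q₁ ∪ Q₂) (Finset.Nonempty.mono Finset.subset_union_left hQ₁)
                  (y - x) : Ω → ℝ) ω < min e₁ e₂} →
              ω ∈ {ω | (nQ ν Q₂ hQ₂ (y - x) : Ω → ℝ) ω < e₂} := by
            filter_upwards [AEEqFun.coeFn_le.2
              (Finset.sup'_mono (fun i => ν i (y - x)) Finset.subset_union_right hQ₂)]
              with ω h1 hω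
            try simp only [Set.mem_setOf_eq] at hω ⊢
            exact lt_of_lt_of_le (lt_of_le_of_lt h1 hω) (min_le_right _ _)
          calc (1:ℝ) - l₂ ≤ 1 - min l₁ l₂ := by
                have := min_le_right l₁ l₂; linarith
            _ < _ := hy
            _ ≤ _ := toReal_mono_meas (meas_mono_of_ae_imp hmono)
      rw [hrw] at ho'
      obtain ⟨⟨⟨Q, hQ⟩, ⟨e, he⟩, ⟨l, hl⟩⟩, hsub⟩ := (Filter.mem_iInf_of_directed hdir o).1 ho'
      rw [Filter.mem_principal] at hsub
      obtain ⟨y, hyG, hy⟩ := hnear Q hQ e l he hl.1 hl.2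
      exact ⟨y, hsub hy, hyG⟩
end ElClosure

section Glb
open Filter
set_option linter.unusedSectionVars false
set_option maxHeartbeats 1000000
variable {Ω : Type*} [MeasurableSpace Ω] {μ : Measure Ω} [IsProbabilityMeasure μ]
  {𝕜 : Type*} [RCLike 𝕜] {E : Type*} [AddCommGroup E] [Module (Ω →ₘ[μ] 𝕜) E]
  {ι : Type*} {ν : ι → E → Ω →ₘ[μ] ℝ}

variable (hν : IsRLCModule 𝕜 ν)
include hν

/-- (1) ⇒ (2): T_c-nearness implies (ε,λ)-nearness. -/
lemma tcNear_to_elNear (x : E) (G : Set E)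
    (h : ∀ (Q : Finset ι) (hQ : Q.Nonempty) (ε : Ω →ₘ[μ] ℝ), L0.StrPos ε →
      ∃ y ∈ G, nQ ν Q hQ (y - x) ≤ ε) :
    ∀ (Q : Finset ι) (hQ : Q.Nonempty) (e l : ℝ), 0 < e → 0 < l → l < 1 →
      ∃ y ∈ G, (μ {ω | (nQ ν Q hQ (y - x) : Ω → ℝ) ω < e}).toReal > 1 - l := by
  intro Q hQ e l he hl _
  have hstr : L0.StrPos (AEEqFun.const Ω (μ := μ) (e/2)) := by
    filter_upwards [AEEqFun.coeFn_const Ω (μ := μ) (e/2)] with ω h1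
    rw [h1]; show (0:ℝ) < e/2; positivity
  obtain ⟨y, hyG, hy⟩ := h Q hQ _ hstr
  refine ⟨y, hyG, ?_⟩
  have hfull : ∀ᵐ ω ∂μ, ω ∈ {ω | (nQ ν Q hQ (y - x) : Ω → ℝ) ω < e} := by
    filter_upwards [AEEqFun.coeFn_le.2 hy, AEEqFun.coeFn_const Ω (μ := μ) (e/2)] with ω h1 h2
    have : (nQ ν Q hQ (y - x) : Ω → ℝ) ω ≤ e/2 := by
      calc (nQ ν Q hQ (y - x) : Ω → ℝ) ω ≤ _ := h1
        _ = e/2 := h2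
    show (nQ ν Q hQ (y - x) : Ω → ℝ) ω < e
    linarith
  rw [toReal_full hfull]
  linarith

/-- (2) ⇒ (3): (ε,λ)-nearness implies that the gauge distance has infimum 0. -/
lemma elNear_to_glb (x : E) (G : Set E)
    (h : ∀ (Q : Finset ι) (hQ : Q.Nonempty) (e l : ℝ), 0 < e → 0 < l → l < 1 →
      ∃ y ∈ G, (μ {ω | (nQ ν Q hQ (y - x) : Ω → ℝ) ω < e}).toReal > 1 - l) :
    ∀ (Q : Finset ι) (hQ : Q.Nonempty),
      IsGLB {c | ∃ y ∈ G, c = nQ ν Q hQ (x - y)} 0 := by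
  intro Q hQ
  constructor
  · rintro c ⟨y, hyG, rfl⟩
    rw [← AEEqFun.coeFn_le]
    filter_upwards [nQ_nonneg_ae hν Q hQ (x - y), AEEqFun.coeFn_zero (β := ℝ) (μ := μ)]
      with ω h1 h2
    rw [h2]; exact h1
  · intro b hb
    by_contra hb0
    have hbne : ¬ (∀ᵐ ω ∂μ, (b : Ω → ℝ) ω ≤ 0) := by
      intro hae
      apply hb0
      rw [← AEEqFun.coeFn_le]
      filter_upwards [hae, AEEqFun.coeFn_zero (β := ℝ) (μ := μ)] with ω h1 h2
      rw [h2]; exact h1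
    have hpos : μ {ω | 0 < (b : Ω → ℝ) ω} ≠ 0 := by
      intro h0
      apply hbne
      rw [ae_iff]
      convert h0 using 2
      ext ω; simp [not_le]
    have hcup : {ω | 0 < (b : Ω → ℝ) ω} ⊆ ⋃ n : ℕ, {ω | 1/(n+1 : ℝ) < (b : Ω → ℝ) ω} := by
      intro ω hω
      obtain ⟨n, hn⟩ := exists_nat_one_div_lt (K := ℝ) hω
      exact Set.mem_iUnion.2 ⟨n, hn⟩
    have hex : ∃ n : ℕ, μ {ω | 1/(n+1 : ℝ) < (b : Ω → ℝ) ω} ≠ 0 := by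
      by_contra hall
      push_neg at hall
      exact hpos (le_antisymm (le_trans (measure_mono hcup)
        (le_of_eq (measure_iUnion_null_iff.2 hall))) (zero_le))
    clear hb0 hbne
    obtain ⟨n, hn⟩ := hex
    set δ : ℝ := 1/(n+1 : ℝ) with hδ
    have hδpos : 0 < δ := by positivity
    set S := {ω | δ < (b : Ω → ℝ) ω} with hS
    have hSmeas : MeasurableSet S :=
      measurableSet_lt measurable_const (AEEqFun.stronglyMeasurable _).measurable
    set α : ℝ := (μ S).toReal with hα
    have hαpos : 0 < α := ENNReal.toReal_pos hn (measure_ne_top μ _)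
    have hα1 : α ≤ 1 := by
      have := toReal_mono_meas (μ := μ) (measure_mono (Set.subset_univ S))
      rwa [measure_univ, ENNReal.toReal_one] at this
    obtain ⟨y, hyG, hy⟩ := h Q hQ δ (α/2) hδpos (by positivity) (by linarith)
    have hble : b ≤ nQ ν Q hQ (x - y) := hb ⟨y, hyG, rfl⟩
    have hflip : nQ ν Q hQ (x - y) = nQ ν Q hQ (y - x) := nQ_neg hν Q hQ x y
    rw [hflip] at hble
    have hsub : ∀ᵐ ω ∂μ, ω ∈ {ω | (nQ ν Q hQ (y - x) : Ω → ℝ) ω < δ} → ω ∈ Sᶜ := by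
      filter_upwards [AEEqFun.coeFn_le.2 hble] with ω h1 hω
      try simp only [Set.mem_setOf_eq] at hω
      simp only [Set.mem_compl_iff, hS, Set.mem_setOf_eq, not_lt]
      exact le_of_lt (lt_of_le_of_lt h1 hω)
    have : (μ {ω | (nQ ν Q hQ (y - x) : Ω → ℝ) ω < δ}).toReal ≤ 1 - α := by
      refine le_trans (toReal_mono_meas (meas_mono_of_ae_imp hsub)) ?_
      rw [compl_toReal hSmeas]
    linarith
end Glb

section PartE
open Filter
set_option linter.unusedSectionVars false
set_option maxHeartbeats 1000000
variable {Ω : Type*} [MeasurableSpace Ω] {μ : Measure Ω} [IsProbabilityMeasure μ]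
  {𝕜 : Type*} [RCLike 𝕜] {E : Type*} [AddCommGroup E] [Module (Ω →ₘ[μ] 𝕜) E]
  {ι : Type*} {ν : ι → E → Ω →ₘ[μ] ℝ}

variable (hν : IsRLCModule 𝕜 ν)
include hν

lemma ind_nQ_eq_ae (Q : Finset ι) (hQ : Q.Nonempty) {B : Set Ω} (hB : MeasurableSet B)
    {u v : E} (h : L0.ind μ 𝕜 B hB • u = L0.ind μ 𝕜 B hB • v) :
    ∀ᵐ ω ∂μ, ω ∈ B → (nQ ν Q hQ u : Ω → ℝ) ω = (nQ ν Q hQ v : Ω → ℝ) ω := by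
  have hall : ∀ᵐ ω ∂μ, ∀ i ∈ Q, ω ∈ B → (ν i u : Ω → ℝ) ω = (ν i v : Ω → ℝ) ω :=
    (Finset.eventually_all Q).2 fun i _ => ind_smul_eq_ae hν hB h i
  filter_upwards [hall, nQ_coe Q hQ u, nQ_coe Q hQ v] with ω h1 h2 h3 hω
  rw [h2, h3]
  exact Finset.sup'_congr hQ rfl fun i hi => h1 i hi hω

lemma pair_min (G : Set E) (hccp : HasCCP μ 𝕜 G) (x : E) (Q : Finset ι) (hQ : Q.Nonempty)
    {y₁ y₂ : E} (h₁ : y₁ ∈ G) (h₂ : y₂ ∈ G) :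
    ∃ z ∈ G, ∀ᵐ ω ∂μ, (nQ ν Q hQ (x - z) : Ω → ℝ) ω
      = min ((nQ ν Q hQ (x - y₁) : Ω → ℝ) ω) ((nQ ν Q hQ (x - y₂) : Ω → ℝ) ω) := by
  classical
  set B : Set Ω :=
    {ω | (nQ ν Q hQ (x - y₁) : Ω → ℝ) ω ≤ (nQ ν Q hQ (x - y₂) : Ω → ℝ) ω} with hBdef
  have hBmeas : MeasurableSet B := measurableSet_le
    (AEEqFun.stronglyMeasurable _).measurable (AEEqFun.stronglyMeasurable _).measurable
  set A : ℕ → Set Ω := fun n => if n = 0 then B else if n = 1 then Bᶜ else ∅ with hAdef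
  have hpart : IsMeasPartition A := by
    refine ⟨?_, ?_, ?_⟩
    · intro n
      rcases n with _ | _ | n
      · have h0 : A 0 = B := by simp [hAdef]
        rw [h0]; exact hBmeas
      · have h1 : A 1 = Bᶜ := by simp [hAdef]
        rw [h1]; exact hBmeas.compl
      · have h2 : A (n+2) = ∅ := by simp [hAdef]
        rw [h2]; exact MeasurableSet.empty
    · intro m n hmn
      simp only [Function.onFun]
      rcases m with _ | _ | m <;> rcases n with _ | _ | n <;>
        simp only [hAdef] <;> norm_num <;>
        first
          | exact absurd rfl hmn
          | exact disjoint_compl_right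
          | exact disjoint_compl_left
          | exact Set.disjoint_empty _
          | exact Set.empty_disjoint _
    · ext ω
      simp only [Set.mem_iUnion, Set.mem_univ, iff_true]
      by_cases hω : ω ∈ B
      · exact ⟨0, by simp [hAdef, hω]⟩
      · exact ⟨1, by simp [hAdef, hω]⟩
  obtain ⟨z, hzG, hz⟩ := hccp A hpart (fun n => if n = 0 then y₁ else y₂)
    (fun n => by by_cases h : n = 0 <;> simp [h, h₁, h₂])
  have hz0 : L0.ind μ 𝕜 B hBmeas • z = L0.ind μ 𝕜 B hBmeas • y₁ := by
    have := hz 0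
    simpa [hAdef] using this
  have hz1 : L0.ind μ 𝕜 Bᶜ hBmeas.compl • z = L0.ind μ 𝕜 Bᶜ hBmeas.compl • y₂ := by
    have := hz 1
    simpa [hAdef] using this
  have hxz0 : L0.ind μ 𝕜 B hBmeas • (x - z) = L0.ind μ 𝕜 B hBmeas • (x - y₁) := by
    rw [smul_sub, smul_sub, hz0]
  have hxz1 : L0.ind μ 𝕜 Bᶜ hBmeas.compl • (x - z) = L0.ind μ 𝕜 Bᶜ hBmeas.compl • (x - y₂) := by
    rw [smul_sub, smul_sub, hz1]
  have hq0 := ind_nQ_eq_ae hν Q hQ hBmeas hxz0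
  have hq1 := ind_nQ_eq_ae hν Q hQ hBmeas.compl hxz1
  refine ⟨z, hzG, ?_⟩
  filter_upwards [hq0, hq1] with ω hω0 hω1
  by_cases hω : ω ∈ B
  · have hle : (nQ ν Q hQ (x - y₁) : Ω → ℝ) ω ≤ (nQ ν Q hQ (x - y₂) : Ω → ℝ) ω := hω
    rw [hω0 hω, min_eq_left hle]
  · have hlt : (nQ ν Q hQ (x - y₂) : Ω → ℝ) ω ≤ (nQ ν Q hQ (x - y₁) : Ω → ℝ) ω := by
      have := hω
      simp only [hBdef, Set.mem_setOf_eq] at this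
      exact le_of_not_ge this
    rw [hω1 hω, min_eq_right hlt]

lemma glb_to_tcNear (G : Set E) (hG : G.Nonempty) (hccp : HasCCP μ 𝕜 G) (x : E)
    (hglb : ∀ (Q : Finset ι) (hQ : Q.Nonempty),
      IsGLB {c | ∃ y ∈ G, c = nQ ν Q hQ (x - y)} 0) :
    ∀ (Q : Finset ι) (hQ : Q.Nonempty) (ε : Ω →ₘ[μ] ℝ), L0.StrPos ε →
      ∃ y ∈ G, nQ ν Q hQ (y - x) ≤ ε := by
  classical
  intro Q hQ ε hε
  set A : E → Set Ω :=
    fun y => {ω | (nQ ν Q hQ (x - y) : Ω → ℝ) ω < (ε : Ω → ℝ) ω} with hAdef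
  have hAmeas : ∀ y, MeasurableSet (A y) := fun y => measurableSet_lt
    (AEEqFun.stronglyMeasurable _).measurable (AEEqFun.stronglyMeasurable _).measurable
  set T : Set ℝ := {r | ∃ y ∈ G, r = (μ (A y)).toReal} with hTdef
  obtain ⟨y₀, hy₀⟩ := hG
  have hTne : T.Nonempty := ⟨(μ (A y₀)).toReal, y₀, hy₀, rfl⟩
  have hTbdd : BddAbove T := by
    refine ⟨1, ?_⟩
    rintro r ⟨y, hy, rfl⟩
    have := toReal_mono_meas (μ := μ) (measure_mono (Set.subset_univ (A y)))
    rwa [measure_univ, ENNReal.toReal_one] at this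
  set t : ℝ := sSup T with htdef
  have ht0 : 0 ≤ t := le_trans ENNReal.toReal_nonneg (le_csSup hTbdd ⟨y₀, hy₀, rfl⟩)
  have htnn : ∀ y, y ∈ G → (μ (A y)).toReal ≤ t := fun y hy => le_csSup hTbdd ⟨y, hy, rfl⟩
  have hseq : ∀ k : ℕ, ∃ y, y ∈ G ∧ t - 1/(k+1:ℝ) < (μ (A y)).toReal := by
    intro k
    have hlt : t - 1/(k+1:ℝ) < t := by
      have : (0:ℝ) < 1/(k+1:ℝ) := by positivity
      linarith
    obtain ⟨r, hrT, hr⟩ := exists_lt_of_lt_csSup hTne hlt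
    obtain ⟨y, hy, rfl⟩ := hrT
    exact ⟨y, hy, hr⟩
  choose ys hysG hys using hseq
  have hdir : ∀ y₁, y₁ ∈ G → ∀ y₂, y₂ ∈ G → ∃ z, z ∈ G ∧ ∀ᵐ ω ∂μ,
      (nQ ν Q hQ (x - z) : Ω → ℝ) ω
        = min ((nQ ν Q hQ (x - y₁) : Ω → ℝ) ω) ((nQ ν Q hQ (x - y₂) : Ω → ℝ) ω) := by
    intro y₁ hy₁ y₂ hy₂
    obtain ⟨z, hz, hmin⟩ := pair_min hν G hccp x Q hQ hy₁ hy₂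
    exact ⟨z, hz, hmin⟩
  choose dz hdzG hdzmin using hdir
  obtain ⟨w, hw0, hwsucc⟩ : ∃ w : ℕ → E, w 0 = ys 0 ∧
      ∀ k, w (k+1) = (if h : w k ∈ G then dz (w k) h (ys (k+1)) (hysG (k+1)) else w k) :=
    ⟨fun k => Nat.rec (ys 0)
      (fun k u => if h : u ∈ G then dz u h (ys (k+1)) (hysG (k+1)) else u) k,
      rfl, fun k => rfl⟩
  have hwG : ∀ k, w k ∈ G := by
    intro k
    induction k with
    | zero => rw [hw0]; exact hysG 0
    | succ k ih => rw [hwsucc k, dif_pos ih]; exact hdzG _ _ _ _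
  have hwmin : ∀ k, ∀ᵐ ω ∂μ, (nQ ν Q hQ (x - w (k+1)) : Ω → ℝ) ω
      = min ((nQ ν Q hQ (x - w k) : Ω → ℝ) ω) ((nQ ν Q hQ (x - ys (k+1)) : Ω → ℝ) ω) := by
    intro k
    rw [hwsucc k, dif_pos (hwG k)]
    exact hdzmin _ _ _ _
  have hwmono : ∀ k, ∀ᵐ ω ∂μ,
      (nQ ν Q hQ (x - w (k+1)) : Ω → ℝ) ω ≤ (nQ ν Q hQ (x - w k) : Ω → ℝ) ω := by
    intro k
    filter_upwards [hwmin k] with ω h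
    rw [h]; exact min_le_left _ _
  have hwys : ∀ k, ∀ᵐ ω ∂μ,
      (nQ ν Q hQ (x - w k) : Ω → ℝ) ω ≤ (nQ ν Q hQ (x - ys k) : Ω → ℝ) ω := by
    intro k
    cases k with
    | zero => rw [hw0]; filter_upwards with ω; exact le_rfl
    | succ k =>
        filter_upwards [hwmin k] with ω h
        rw [h]; exact min_le_right _ _
  have hwmono2 : ∀ j k, ∀ᵐ ω ∂μ,
      (nQ ν Q hQ (x - w (j+k)) : Ω → ℝ) ω ≤ (nQ ν Q hQ (x - w j) : Ω → ℝ) ω := by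
    intro j k
    induction k with
    | zero => filter_upwards with ω; exact le_rfl
    | succ k ih =>
        filter_upwards [ih, hwmono (j+k)] with ω h1 h2
        exact le_trans h2 h1
  have hwmono' : ∀ j k, j ≤ k → ∀ᵐ ω ∂μ,
      (nQ ν Q hQ (x - w k) : Ω → ℝ) ω ≤ (nQ ν Q hQ (x - w j) : Ω → ℝ) ω := by
    intro j k hjk
    have := hwmono2 j (k - j)
    rwa [Nat.add_sub_cancel' hjk] at this
  have hwlt : ∀ k : ℕ, t - 1/(k+1:ℝ) < (μ (A (w k))).toReal := by
    intro k
    refine lt_of_lt_of_le (hys k) (toReal_mono_meas (meas_mono_of_ae_imp ?_))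
    filter_upwards [hwys k] with ω h1 hω
    simp only [hAdef, Set.mem_setOf_eq] at hω ⊢
    exact lt_of_le_of_lt h1 hω
  set C : ℕ → Set Ω := fun k => ⋃ j ∈ Finset.range (k+1), A (w j) with hCdef
  have hCmeas : ∀ k, MeasurableSet (C k) :=
    fun k => (Finset.range (k+1)).measurableSet_biUnion fun j _ => hAmeas (w j)
  have hCmono : Monotone C := by
    intro a b hab
    exact Set.biUnion_subset_biUnion_left
      (Finset.coe_subset.2 (Finset.range_subset_range.2 (by omega)))
  have hCwsub : ∀ k, ∀ᵐ ω ∂μ, ω ∈ C k → ω ∈ A (w k) := by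
    intro k
    have hall : ∀ᵐ ω ∂μ, ∀ j, j ≤ k → (ω ∈ A (w j) → ω ∈ A (w k)) := by
      rw [ae_all_iff]
      intro j
      by_cases hjk : j ≤ k
      · filter_upwards [hwmono' j k hjk] with ω h1 _ hω
        simp only [hAdef, Set.mem_setOf_eq] at hω ⊢
        exact lt_of_le_of_lt h1 hω
      · filter_upwards with ω hjk'
        exact absurd hjk' hjk
    filter_upwards [hall] with ω h1 hω
    obtain ⟨j, hj, hωj⟩ := Set.mem_iUnion₂.1 hω
    exact h1 j (Nat.lt_succ_iff.1 (Finset.mem_range.1 hj)) hωj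
  set U : Set Ω := ⋃ j, A (w j) with hUdef
  have hUmeas : MeasurableSet U := MeasurableSet.iUnion fun j => hAmeas (w j)
  have hCsubU : ∀ k, C k ⊆ U := by
    intro k ω hω
    obtain ⟨j, _, hωj⟩ := Set.mem_iUnion₂.1 hω
    exact Set.mem_iUnion.2 ⟨j, hωj⟩
  have hCU : (⋃ k, C k) = U := by
    apply Set.Subset.antisymm
    · exact Set.iUnion_subset fun k => hCsubU k
    · refine Set.iUnion_subset fun j => ?_
      intro ω hω
      exact Set.mem_iUnion.2 ⟨j, Set.mem_biUnion (Finset.self_mem_range_succ j) hω⟩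
  have hUt : t ≤ (μ U).toReal := by
    refine le_of_forall_pos_le_add fun δ hδ => ?_
    obtain ⟨k, hk⟩ := exists_nat_one_div_lt hδ
    have h1 : t - 1/(k+1:ℝ) < (μ (A (w k))).toReal := hwlt k
    have h2 : (μ (A (w k))).toReal ≤ (μ U).toReal :=
      toReal_mono_meas (measure_mono (Set.subset_iUnion (fun j => A (w j)) k))
    linarith
  have haes : ∀ y, y ∈ G → μ (A y \ U) = 0 := by
    intro y hy
    have hk : ∀ k, (μ (A y ∪ C k)).toReal ≤ t := by
      intro k
      have hzmin := hdzmin y hy (w k) (hwG k)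
      have hsub : ∀ᵐ ω ∂μ, ω ∈ (A y ∪ C k) → ω ∈ A (dz y hy (w k) (hwG k)) := by
        filter_upwards [hzmin, hCwsub k] with ω h1 h2 hω
        simp only [hAdef, Set.mem_setOf_eq]
        rw [h1]
        rcases hω with hω | hω
        · simp only [hAdef, Set.mem_setOf_eq] at hω
          exact lt_of_le_of_lt (min_le_left _ _) hω
        · have h3 := h2 hω
          simp only [hAdef, Set.mem_setOf_eq] at h3
          exact lt_of_le_of_lt (min_le_right _ _) h3
      exact le_trans (toReal_mono_meas (meas_mono_of_ae_imp hsub)) (htnn _ (hdzG y hy (w k) (hwG k)))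
    have hmono2 : Monotone fun k => A y ∪ C k :=
      fun a b hab => Set.union_subset_union_right _ (hCmono hab)
    have htend := tendsto_measure_iUnion_atTop (μ := μ) hmono2
    have hUnion : (⋃ k, (A y ∪ C k)) = A y ∪ U := by
      rw [← Set.union_iUnion, hCU]
    have hle2 : μ (A y ∪ U) ≤ ENNReal.ofReal t := by
      rw [← hUnion]
      refine le_of_tendsto htend (Filter.Eventually.of_forall fun k => ?_)
      show μ (A y ∪ C k) ≤ ENNReal.ofReal t
      have heq : μ (A y ∪ C k) = ENNReal.ofReal ((μ (A y ∪ C k)).toReal) :=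
        (ENNReal.ofReal_toReal (measure_ne_top μ _)).symm
      rw [heq]
      exact ENNReal.ofReal_le_ofReal (hk k)
    have hle3 : μ (A y ∪ U) ≤ μ U := by
      have h4 : (μ (A y ∪ U)).toReal ≤ (μ U).toReal := by
        have h5 : (μ (A y ∪ U)).toReal ≤ t := by
          have := ENNReal.toReal_mono (by simp) hle2
          rwa [ENNReal.toReal_ofReal ht0] at this
        linarith [hUt]
      exact (ENNReal.toReal_le_toReal (measure_ne_top μ _) (measure_ne_top μ _)).1 h4
    by_contra hne0
    have hlt : μ U < μ U + μ (A y \ U) := ENNReal.lt_add_right (measure_ne_top μ _) hne0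
    have hsplit : μ (U ∪ (A y \ U)) = μ U + μ (A y \ U) :=
      measure_union disjoint_sdiff_self_right ((hAmeas y).diff hUmeas)
    have hUU : U ∪ (A y \ U) = A y ∪ U := by
      rw [Set.union_diff_self, Set.union_comm]
    rw [hUU] at hsplit
    rw [← hsplit] at hlt
    exact absurd hle3 (not_le.2 hlt)
  have hUfull : ∀ᵐ ω ∂μ, ω ∈ U := by
    set c : Ω →ₘ[μ] ℝ := L0.ind μ ℝ Uᶜ hUmeas.compl * ε with hcdef
    have hcind : ∀ᵐ ω ∂μ, (c : Ω → ℝ) ω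
        = (Uᶜ).indicator (fun _ => (1:ℝ)) ω * (ε : Ω → ℝ) ω := by
      filter_upwards [AEEqFun.coeFn_mul (L0.ind μ ℝ Uᶜ hUmeas.compl) ε,
        AEEqFun.coeFn_mk ((Uᶜ).indicator fun _ => (1:ℝ))
          ((stronglyMeasurable_const.indicator hUmeas.compl).aestronglyMeasurable)]
        with ω h1 h2
      rw [hcdef, h1, Pi.mul_apply]
      exact congrArg (fun r => r * (ε : Ω → ℝ) ω) h2
    have hclb : c ∈ lowerBounds {c | ∃ y ∈ G, c = nQ ν Q hQ (x - y)} := by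
      rintro _ ⟨y, hy, rfl⟩
      rw [← AEEqFun.coeFn_le]
      have hAU : ∀ᵐ ω ∂μ, ω ∈ A y → ω ∈ U := by
        have hset : {ω | ¬(ω ∈ A y → ω ∈ U)} = A y \ U := by
          ext ω
          simp only [Set.mem_setOf_eq, Set.mem_diff, Classical.not_imp]
        rw [ae_iff, hset]
        exact haes y hy
      filter_upwards [hcind, hAU, nQ_nonneg_ae hν Q hQ (x - y)] with ω h1 h2 h3
      rw [h1]
      by_cases hω : ω ∈ U
      · rw [Set.indicator_of_notMem (Set.notMem_compl_iff.2 hω), zero_mul]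
        exact h3
      · have hωA : ω ∉ A y := fun h => hω (h2 h)
        have hge : ¬ ((nQ ν Q hQ (x - y) : Ω → ℝ) ω < (ε : Ω → ℝ) ω) := by
          simpa [hAdef] using hωA
        rw [Set.indicator_of_mem (Set.mem_compl hω), one_mul]
        exact not_lt.1 hge
    have hc0 : c ≤ 0 := (hglb Q hQ).2 hclb
    filter_upwards [AEEqFun.coeFn_le.2 hc0, hcind, hε,
      AEEqFun.coeFn_zero (β := ℝ) (μ := μ)] with ω h1 h2 h3 h4
    by_contra hω
    rw [h2, Set.indicator_of_mem (Set.mem_compl hω), one_mul] at h1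
    rw [h4] at h1
    exact absurd (lt_of_lt_of_le h3 h1) (lt_irrefl 0)
  set B : ℕ → Set Ω := fun n => Nat.casesOn n (C 0 ∪ Uᶜ) (fun m => C (m+1) \ C m) with hBdef
  have hB0 : B 0 = C 0 ∪ Uᶜ := rfl
  have hBs : ∀ n, B (n+1) = C (n+1) \ C n := fun n => rfl
  have hkey : ∀ m n, m < n → Disjoint (B m) (B n) := by
    intro m n hmn
    cases n with
    | zero => omega
    | succ n =>
        rw [hBs n]
        refine Set.disjoint_left.2 fun ω hωm hωn => ?_
        cases m with
        | zero =>
            rw [hB0] at hωm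
            rcases hωm with hωm | hωm
            · exact hωn.2 (hCmono (Nat.zero_le n) hωm)
            · exact hωm (hCsubU (n+1) hωn.1)
        | succ m =>
            rw [hBs m] at hωm
            exact hωn.2 (hCmono (by omega : m+1 ≤ n) hωm.1)
  have hpart : IsMeasPartition B := by
    refine ⟨?_, ?_, ?_⟩
    · intro n
      cases n with
      | zero => exact (hCmeas 0).union hUmeas.compl
      | succ n => exact (hCmeas (n+1)).diff (hCmeas n)
    · intro m n hmn
      rcases lt_or_gt_of_ne hmn with h | h
      · exact hkey m n h
      · exact (hkey n m h).symm
    · ext ω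
      simp only [Set.mem_iUnion, Set.mem_univ, iff_true]
      by_cases hω : ω ∈ U
      · obtain ⟨j, hj⟩ := Set.mem_iUnion.1 hω
        have hex : ∃ k, ω ∈ C k :=
          ⟨j, Set.mem_biUnion (Finset.self_mem_range_succ j) hj⟩
        rcases hfind : Nat.find hex with _ | n
        · refine ⟨0, ?_⟩
          rw [hB0]
          exact Or.inl (hfind ▸ Nat.find_spec hex)
        · refine ⟨n+1, ?_⟩
          rw [hBs n]
          refine ⟨hfind ▸ Nat.find_spec hex, ?_⟩
          exact Nat.find_min hex (by omega)
      · exact ⟨0, Or.inr hω⟩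
  obtain ⟨yf, hyfG, hyf⟩ := hccp B hpart (fun n => w n) (fun n => hwG n)
  refine ⟨yf, hyfG, ?_⟩
  have hflip : nQ ν Q hQ (yf - x) = nQ ν Q hQ (x - yf) := (nQ_neg hν Q hQ x yf).symm
  rw [hflip, ← AEEqFun.coeFn_le]
  have hBeq : ∀ n, ∀ᵐ ω ∂μ, ω ∈ B n →
      (nQ ν Q hQ (x - yf) : Ω → ℝ) ω = (nQ ν Q hQ (x - w n) : Ω → ℝ) ω := by
    intro n
    have hsm : L0.ind μ 𝕜 (B n) (hpart.meas n) • (x - yf)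
        = L0.ind μ 𝕜 (B n) (hpart.meas n) • (x - w n) := by
      rw [smul_sub, smul_sub, hyf n]
    exact ind_nQ_eq_ae hν Q hQ (hpart.meas n) hsm
  have hBA : ∀ n, ∀ᵐ ω ∂μ, ω ∈ B n → ω ∈ A (w n) := by
    intro n
    cases n with
    | zero =>
        filter_upwards [hUfull, hCwsub 0] with ω h1 h2 hω
        rw [hB0] at hω
        rcases hω with hω | hω
        · exact h2 hω
        · exact absurd h1 hω
    | succ n =>
        filter_upwards [hCwsub (n+1)] with ω h2 hω
        rw [hBs n] at hω
        exact h2 hω.1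
  have hcover : ∀ ω, ∃ n, ω ∈ B n := by
    intro ω
    have : ω ∈ ⋃ n, B n := hpart.cover ▸ Set.mem_univ ω
    exact Set.mem_iUnion.1 this
  filter_upwards [ae_all_iff.2 hBeq, ae_all_iff.2 hBA] with ω h1 h2
  obtain ⟨n, hn⟩ := hcover ω
  have h3 := h2 n hn
  simp only [hAdef, Set.mem_setOf_eq] at h3
  rw [h1 n hn]
  exact le_of_lt h3
end PartE



/-- **Theorem 3.18.** Let `(E,P)` be a random locally convex module, `x ∈ E` and `G ⊆ E` a
nonempty subset with the countable concatenation property. Then the following are equivalent: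
(1) `x` is in the `T_c`-closure of `G`; (2) `x` is in the `(ε,λ)`-closure of `G`;
(3) `d*(x,G) = 0` (equivalently, `0` is the greatest lower bound of `{‖x−y‖_Q : y ∈ G}` for
every finite nonempty `Q`). In particular a subset with the countable concatenation property
is `T_c`-closed iff it is closed in the `(ε,λ)`-topology. -/
theorem tc_closure_eq_el_closure_of_ccp {Ω : Type*} [MeasurableSpace Ω] {μ : Measure Ω}
    [IsProbabilityMeasure μ] {𝕜 : Type*} [RCLike 𝕜] {E : Type*} [AddCommGroup E]
    [Module (Ω →ₘ[μ] 𝕜) E] {ι : Type*} (ν : ι → E → Ω →ₘ[μ] ℝ) (hν : IsRLCModule 𝕜 ν)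
    (x : E) (G : Set E) (hG : G.Nonempty) (hccp : HasCCP μ 𝕜 G) :
    (x ∈ @closure E (tcTop ν) G ↔ x ∈ @closure E (elTop ν) G) ∧
    (x ∈ @closure E (elTop ν) G ↔
      ∀ (Q : Finset ι) (hQ : Q.Nonempty),
        IsGLB {c | ∃ y ∈ G, c = nQ ν Q hQ (x - y)} 0) ∧
    (@IsClosed E (tcTop ν) G ↔ @IsClosed E (elTop ν) G) := by
  have key : ∀ z : E,
      (z ∈ @closure E (tcTop ν) G ↔ z ∈ @closure E (elTop ν) G) ∧
      (z ∈ @closure E (elTop ν) G ↔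
        ∀ (Q : Finset ι) (hQ : Q.Nonempty),
          IsGLB {c | ∃ y ∈ G, c = nQ ν Q hQ (z - y)} 0) := by
    intro z
    have htc := mem_tcClosure hν z G hG
    have hel := mem_elClosure hν z G hG
    refine ⟨⟨fun h => ?_, fun h => ?_⟩, ⟨fun h => ?_, fun h => ?_⟩⟩
    · exact hel.2 (tcNear_to_elNear hν z G (htc.1 h))
    · exact htc.2 (glb_to_tcNear hν G hG hccp z (elNear_to_glb hν z G (hel.1 h)))
    · exact elNear_to_glb hν z G (hel.1 h)
    · exact hel.2 (tcNear_to_elNear hν z G (glb_to_tcNear hν G hG hccp z h))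
  refine ⟨(key x).1, (key x).2, ?_⟩
  constructor
  · intro h
    rw [← @closure_subset_iff_isClosed E (elTop ν) G]
    intro z hz
    exact (@closure_subset_iff_isClosed E (tcTop ν) G).2 h (((key z).1).2 hz)
  · intro h
    rw [← @closure_subset_iff_isClosed E (tcTop ν) G]
    intro z hz
    exact (@closure_subset_iff_isClosed E (elTop ν) G).2 h (((key z).1).1 hz)
end

section
/- Let (E,P) be a random locally convex module, x ∈ E, and G ⊆ E a nonempty T_c-closed subset having the countable concatenation property such that 1_A·{x} ∩ 1_A·G = ∅ for all A ∈ F with P(A) > 0. Then d*(x,G) > 0 a.s. on Ω, i.e., min(d*(x,G),1) ∈ L⁰₊₊. -/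
open MeasureTheory

section Aux

open Filter Real

variable {Ω : Type*} [MeasurableSpace Ω] {μ : Measure Ω}

namespace L0x

lemma add_le_add {f f' g g' : Ω →ₘ[μ] ℝ} (h1 : f ≤ f') (h2 : g ≤ g') : f + g ≤ f' + g' := by
  rw [← AEEqFun.coeFn_le]
  filter_upwards [AEEqFun.coeFn_le.2 h1, AEEqFun.coeFn_le.2 h2, AEEqFun.coeFn_add f g,
    AEEqFun.coeFn_add f' g'] with ω e1 e2 e3 e4
  rw [e3, e4]; exact _root_.add_le_add e1 e2

lemma neg_le_neg {f g : Ω →ₘ[μ] ℝ} (h : f ≤ g) : -g ≤ -f := by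
  rw [← AEEqFun.coeFn_le]
  filter_upwards [AEEqFun.coeFn_le.2 h, AEEqFun.coeFn_neg f, AEEqFun.coeFn_neg g] with ω e1 e2 e3
  rw [e2, e3]; simpa using e1

variable {𝕜 : Type*} [RCLike 𝕜]

lemma abs_coeFn (ξ : Ω →ₘ[μ] 𝕜) : ⇑(L0.abs ξ) =ᵐ[μ] fun ω => ‖ξ ω‖ :=
  AEEqFun.coeFn_comp _ _ _

lemma abs_nonneg' (ξ : Ω →ₘ[μ] 𝕜) : (0 : Ω →ₘ[μ] ℝ) ≤ L0.abs ξ := by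
  rw [← AEEqFun.coeFn_le]
  filter_upwards [abs_coeFn ξ, AEEqFun.coeFn_zero (β := ℝ) (μ := μ)] with ω e1 e2
  rw [e1, e2]; exact norm_nonneg _

lemma abs_zero : L0.abs (0 : Ω →ₘ[μ] 𝕜) = 0 := by
  refine AEEqFun.ext ?_
  filter_upwards [abs_coeFn (0 : Ω →ₘ[μ] 𝕜), AEEqFun.coeFn_zero (β := ℝ) (μ := μ),
    AEEqFun.coeFn_zero (β := 𝕜) (μ := μ)] with ω e1 e2 e3
  rw [e1, e2, e3]; simp

lemma abs_neg_one : L0.abs (-1 : Ω →ₘ[μ] 𝕜) = 1 := by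
  refine AEEqFun.ext ?_
  filter_upwards [abs_coeFn (-1 : Ω →ₘ[μ] 𝕜), AEEqFun.coeFn_neg (1 : Ω →ₘ[μ] 𝕜),
    AEEqFun.coeFn_one (β := 𝕜) (μ := μ), AEEqFun.coeFn_one (β := ℝ) (μ := μ)] with ω e1 e2 e3 e4
  rw [e1, e4, e2]; simp [e3]

lemma ind_coeFn (A : Set Ω) (hA : MeasurableSet A) :
    ⇑(L0.ind μ 𝕜 A hA) =ᵐ[μ] A.indicator (fun _ => (1:𝕜)) :=
  AEEqFun.coeFn_mk _ _

lemma abs_ind_coeFn (A : Set Ω) (hA : MeasurableSet A) :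
    ⇑(L0.abs (L0.ind μ 𝕜 A hA)) =ᵐ[μ] A.indicator (fun _ => (1:ℝ)) := by
  filter_upwards [abs_coeFn (L0.ind μ 𝕜 A hA), ind_coeFn (𝕜 := 𝕜) A hA] with ω e1 e2
  rw [e1, e2]
  by_cases h : ω ∈ A <;> simp [h]

lemma ind_add_compl (A : Set Ω) (hA : MeasurableSet A) :
    L0.ind μ 𝕜 A hA + L0.ind μ 𝕜 Aᶜ hA.compl = 1 := by
  refine AEEqFun.ext ?_
  filter_upwards [AEEqFun.coeFn_add (L0.ind μ 𝕜 A hA) (L0.ind μ 𝕜 Aᶜ hA.compl),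
    ind_coeFn (𝕜 := 𝕜) A hA, ind_coeFn (𝕜 := 𝕜) Aᶜ hA.compl,
    AEEqFun.coeFn_one (β := 𝕜) (μ := μ)] with ω e1 e2 e3 e4
  rw [e1]; simp only [Pi.add_apply, e2, e3, e4]
  by_cases h : ω ∈ A <;> simp [h]

lemma ind_mul_ind (A B : Set Ω) (hA : MeasurableSet A) (hB : MeasurableSet B) :
    L0.ind μ 𝕜 A hA * L0.ind μ 𝕜 B hB = L0.ind μ 𝕜 (A ∩ B) (hA.inter hB) := by
  refine AEEqFun.ext ?_
  filter_upwards [AEEqFun.coeFn_mul (L0.ind μ 𝕜 A hA) (L0.ind μ 𝕜 B hB),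
    ind_coeFn (𝕜 := 𝕜) A hA, ind_coeFn (𝕜 := 𝕜) B hB,
    ind_coeFn (𝕜 := 𝕜) (A ∩ B) (hA.inter hB)] with ω e1 e2 e3 e4
  rw [e1]; simp only [Pi.mul_apply, e2, e3, e4]
  by_cases h : ω ∈ A <;> by_cases h' : ω ∈ B <;> simp [h, h']

lemma ind_empty (he : MeasurableSet (∅ : Set Ω)) : L0.ind μ 𝕜 ∅ he = 0 := by
  refine AEEqFun.ext ?_
  filter_upwards [ind_coeFn (𝕜 := 𝕜) ∅ he, AEEqFun.coeFn_zero (β := 𝕜) (μ := μ)] with ω e1 e2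
  rw [e1, e2]; simp

lemma coeFn_finset_sup' {ι : Type*} (Q : Finset ι) (hQ : Q.Nonempty) (f : ι → Ω →ₘ[μ] ℝ) :
    ⇑(Q.sup' hQ f) =ᵐ[μ] fun ω => Q.sup' hQ fun i => f i ω := by
  induction hQ using Finset.Nonempty.cons_induction with
  | singleton i => simp only [Finset.sup'_singleton]; exact Eventually.of_forall fun ω => rfl
  | cons i Q hiQ hQne ih =>
    filter_upwards [AEEqFun.coeFn_sup (f i) (Q.sup' hQne f), ih] with ω e1 e2
    simp only [Finset.sup'_cons, hQne, e1, Pi.sup_apply]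
    rw [e2]

lemma mul_finset_sup' {ι : Type*} (a : Ω →ₘ[μ] ℝ) (ha : 0 ≤ a) (Q : Finset ι) (hQ : Q.Nonempty)
    (f : ι → Ω →ₘ[μ] ℝ) : a * Q.sup' hQ f = Q.sup' hQ fun i => a * f i := by
  refine AEEqFun.ext ?_
  have hmul : ∀ᵐ ω ∂μ, ∀ i ∈ (Q : Set ι), (a * f i) ω = a ω * f i ω :=
    (MeasureTheory.ae_ball_iff Q.countable_toSet).2 fun i _ => AEEqFun.coeFn_mul a (f i)
  filter_upwards [AEEqFun.coeFn_mul a (Q.sup' hQ f), coeFn_finset_sup' Q hQ f,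
    coeFn_finset_sup' Q hQ (fun i => a * f i), hmul, AEEqFun.coeFn_le.2 ha,
    AEEqFun.coeFn_zero (β := ℝ) (μ := μ)] with ω e1 e2 e3 e4 e5 e0
  rw [e1, e3]
  simp only [Pi.mul_apply, e2]
  rw [Finset.comp_sup'_eq_sup'_comp hQ (fun r => a ω * r)
    (fun r s => mul_max_of_nonneg r s (by rw [e0] at e5; simpa using e5))]
  exact Finset.sup'_congr hQ rfl fun i hi => (e4 i (Finset.mem_coe.2 hi)).symm

end L0x

end Aux

section Aux2

open Filter Real

variable {Ω : Type*} [MeasurableSpace Ω] {μ : Measure Ω} {𝕜 : Type*} [RCLike 𝕜]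
  {E : Type*} [AddCommGroup E] [Module (Ω →ₘ[μ] 𝕜) E] {ι : Type*}
  {ν : ι → E → Ω →ₘ[μ] ℝ}

namespace L0x

lemma nQ_nonneg (hν : IsRLCModule 𝕜 ν) (Q : Finset ι) (hQ : Q.Nonempty) (w : E) :
    0 ≤ nQ ν Q hQ w := by
  obtain ⟨i, hi⟩ := id hQ
  unfold nQ
  exact le_trans (hν.nonneg i w) (Finset.le_sup' (fun j => ν j w) hi)

lemma nQ_smul (hν : IsRLCModule 𝕜 ν) (Q : Finset ι) (hQ : Q.Nonempty) (ξ : Ω →ₘ[μ] 𝕜) (w : E) :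
    nQ ν Q hQ (ξ • w) = L0.abs ξ * nQ ν Q hQ w := by
  unfold nQ
  rw [mul_finset_sup' _ (abs_nonneg' ξ)]
  exact Finset.sup'_congr hQ rfl fun i _ => hν.smul i ξ w

lemma nu_zero (hν : IsRLCModule 𝕜 ν) (i : ι) : ν i (0 : E) = 0 := by
  have h := hν.smul i 0 (0 : E)
  rwa [zero_smul, abs_zero, zero_mul] at h

lemma nQ_zero (hν : IsRLCModule 𝕜 ν) (Q : Finset ι) (hQ : Q.Nonempty) :
    nQ ν Q hQ (0 : E) = 0 := by
  unfold nQ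
  rw [Finset.sup'_congr hQ rfl fun i _ => nu_zero hν i]
  exact Finset.sup'_const hQ 0

lemma nQ_neg (hν : IsRLCModule 𝕜 ν) (Q : Finset ι) (hQ : Q.Nonempty) (w : E) :
    nQ ν Q hQ (-w) = nQ ν Q hQ w := by
  have h : (-w : E) = (-1 : Ω →ₘ[μ] 𝕜) • w := (neg_one_smul _ w).symm
  rw [h, nQ_smul hν, abs_neg_one, one_mul]

lemma nQ_add_le (hν : IsRLCModule 𝕜 ν) (Q : Finset ι) (hQ : Q.Nonempty) (w₁ w₂ : E) :
    nQ ν Q hQ (w₁ + w₂) ≤ nQ ν Q hQ w₁ + nQ ν Q hQ w₂ := by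
  unfold nQ
  exact Finset.sup'_le hQ _ fun i hi => le_trans (hν.add_le i w₁ w₂)
    (add_le_add (Finset.le_sup' (fun j => ν j w₁) hi) (Finset.le_sup' (fun j => ν j w₂) hi))

lemma nQ_mono {Q Q' : Finset ι} (hQ : Q.Nonempty) (hQQ' : Q ⊆ Q') (w : E) :
    nQ ν Q hQ w ≤ nQ ν Q' (hQ.mono hQQ') w := by
  unfold nQ
  exact Finset.sup'_le hQ _ fun i hi => Finset.le_sup' (fun j => ν j w) (hQQ' hi)

lemma nQ_eqOn (hν : IsRLCModule 𝕜 ν) {A : Set Ω} (hA : MeasurableSet A) {v v' : E}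
    (h : L0.ind μ 𝕜 A hA • v = L0.ind μ 𝕜 A hA • v') (Q : Finset ι) (hQ : Q.Nonempty) :
    ∀ᵐ ω ∂μ, ω ∈ A → (nQ ν Q hQ v) ω = (nQ ν Q hQ v') ω := by
  have h2 : L0.abs (L0.ind μ 𝕜 A hA) * nQ ν Q hQ v
      = L0.abs (L0.ind μ 𝕜 A hA) * nQ ν Q hQ v' := by
    rw [← nQ_smul hν, ← nQ_smul hν, h]
  have h3 : ⇑(L0.abs (L0.ind μ 𝕜 A hA) * nQ ν Q hQ v)
      =ᵐ[μ] ⇑(L0.abs (L0.ind μ 𝕜 A hA) * nQ ν Q hQ v') := by rw [h2]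
  filter_upwards [h3, AEEqFun.coeFn_mul (L0.abs (L0.ind μ 𝕜 A hA)) (nQ ν Q hQ v),
    AEEqFun.coeFn_mul (L0.abs (L0.ind μ 𝕜 A hA)) (nQ ν Q hQ v'),
    abs_ind_coeFn (𝕜 := 𝕜) A hA] with ω e1 e2 e3 e4 hmem
  rw [e2, e3] at e1
  simp only [Pi.mul_apply, e4, Set.indicator_of_mem hmem, one_mul] at e1
  exact e1

lemma strPos_inf {ε ε' : Ω →ₘ[μ] ℝ} (h : L0.StrPos ε) (h' : L0.StrPos ε') :
    L0.StrPos (ε ⊓ ε') := by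
  filter_upwards [h, h', AEEqFun.coeFn_inf ε ε'] with ω h1 h2 h3
  rw [h3]; exact lt_min h1 h2

lemma glue_two {G : Set E} (hccp : HasCCP μ 𝕜 G) {y z : E} (hy : y ∈ G) (hz : z ∈ G)
    {B : Set Ω} (hB : MeasurableSet B) :
    ∃ w ∈ G, L0.ind μ 𝕜 B hB • w = L0.ind μ 𝕜 B hB • y ∧
      L0.ind μ 𝕜 Bᶜ hB.compl • w = L0.ind μ 𝕜 Bᶜ hB.compl • z := by
  set C : ℕ → Set Ω := fun n => if n = 0 then B else if n = 1 then Bᶜ else ∅ with hC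
  have hpart : IsMeasPartition C := by
    refine ⟨fun n => ?_, fun m n hmn => ?_, ?_⟩
    · rcases n with _|_|n <;> simp [C, hB, hB.compl]
    · rcases m with _|_|m <;> rcases n with _|_|n <;>
        simp_all [C, Function.onFun, disjoint_compl_right, disjoint_compl_left]
    · ext ω
      simp only [Set.mem_iUnion, Set.mem_univ, iff_true]
      by_cases h : ω ∈ B
      · exact ⟨0, by simpa [C] using h⟩
      · exact ⟨1, by simpa [C] using h⟩
  obtain ⟨w, hwG, hw⟩ := hccp C hpart (fun n => if n = 0 then y else z)
    (fun n => by show (if n = 0 then y else z) ∈ G; split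
                 · exact hy
                 · exact hz)
  exact ⟨w, hwG, hw 0, hw 1⟩

end L0x

end Aux2

section Aux3

open Filter Real

variable {Ω : Type*} [MeasurableSpace Ω] {μ : Measure Ω} [IsProbabilityMeasure μ]

namespace L0x

lemma intArctan {f : Ω → ℝ} (hf : AEStronglyMeasurable f μ) :
    Integrable (fun ω => Real.arctan (f ω)) μ := by
  refine Integrable.mono' (integrable_const (π/2))
    (Real.continuous_arctan.comp_aestronglyMeasurable hf) ?_
  refine Eventually.of_forall fun ω => ?_
  rw [Real.norm_eq_abs, abs_le]
  exact ⟨le_of_lt (by simpa using Real.neg_pi_div_two_lt_arctan (f ω)),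
    (Real.arctan_lt_pi_div_two _).le⟩

theorem exists_isGLB_directed (T : Set (Ω →ₘ[μ] ℝ)) (hne : T.Nonempty)
    (hdir : ∀ a ∈ T, ∀ b ∈ T, ∃ c ∈ T, c ≤ a ∧ c ≤ b)
    (b₀ : Ω →ₘ[μ] ℝ) (hb : ∀ c ∈ T, b₀ ≤ c) :
    ∃ g : Ω →ₘ[μ] ℝ, IsGLB T g ∧ ∃ u : ℕ → (Ω →ₘ[μ] ℝ), (∀ n, u n ∈ T) ∧
      (∀ n, u (n+1) ≤ u n) ∧
      ∀ᵐ ω ∂μ, Tendsto (fun n => u n ω) atTop (nhds (g ω)) := by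
  set I : (Ω →ₘ[μ] ℝ) → ℝ := fun c => ∫ ω, Real.arctan (c ω) ∂μ with hI
  have hint : ∀ c : Ω →ₘ[μ] ℝ, Integrable (fun ω => Real.arctan (c ω)) μ :=
    fun c => intArctan c.aestronglyMeasurable
  have hImono : ∀ {c d : Ω →ₘ[μ] ℝ}, c ≤ d → I c ≤ I d := by
    intro c d hcd
    refine integral_mono_ae (hint c) (hint d) ?_
    filter_upwards [AEEqFun.coeFn_le.2 hcd] with ω h using Real.arctan_strictMono.monotone h
  have hIbdd : ∀ c : Ω →ₘ[μ] ℝ, -(π/2) ≤ I c := by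
    intro c
    have h1 : ∫ (_ : Ω), -(π/2) ∂μ ≤ I c :=
      integral_mono_ae (integrable_const _) (hint c)
        (Eventually.of_forall fun ω => (Real.neg_pi_div_two_lt_arctan _).le)
    simpa using h1
  have hbdd : BddBelow (I '' T) := ⟨-(π/2), by rintro _ ⟨c, -, rfl⟩; exact hIbdd c⟩
  set L := sInf (I '' T) with hL
  have hLle : ∀ c ∈ T, L ≤ I c := fun c hc => csInf_le hbdd ⟨c, hc, rfl⟩
  have ht : ∀ n : ℕ, ∃ c ∈ T, I c < L + 1/(n+1) := by
    intro n
    obtain ⟨r, ⟨c, hc, rfl⟩, hr⟩ :=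
      Real.lt_sInf_add_pos (hne.image I) (by positivity : (0:ℝ) < 1/(n+1))
    exact ⟨c, hc, hr⟩
  choose t htT htI using ht
  have hstep : ∀ (a : {c // c ∈ T}) (n : ℕ), ∃ c : {c // c ∈ T}, c.1 ≤ a.1 ∧ c.1 ≤ t n := by
    intro a n
    obtain ⟨c, hc, h1, h2⟩ := hdir a.1 a.2 (t n) (htT n)
    exact ⟨⟨c, hc⟩, h1, h2⟩
  choose step hstep1 hstep2 using hstep
  set u' : ℕ → {c // c ∈ T} := fun n => Nat.rec ⟨t 0, htT 0⟩ (fun n p => step p (n+1)) n with hu'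
  set u : ℕ → Ω →ₘ[μ] ℝ := fun n => (u' n).1 with hu
  have huT : ∀ n, u n ∈ T := fun n => (u' n).2
  have hanti : ∀ n, u (n+1) ≤ u n := fun n => hstep1 (u' n) (n+1)
  have hut : ∀ n, u n ≤ t n := by
    intro n; cases n with
    | zero => exact le_rfl
    | succ n => exact hstep2 (u' n) (n+1)
  have hae : ∀ᵐ ω ∂μ, (∀ n, u (n+1) ω ≤ u n ω) ∧ ∀ n, b₀ ω ≤ u n ω := by
    rw [eventually_and]
    constructor <;> rw [ae_all_iff]
    · exact fun n => AEEqFun.coeFn_le.2 (hanti n)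
    · exact fun n => AEEqFun.coeFn_le.2 (hb _ (huT n))
  have hmeas : AEMeasurable (fun ω => ⨅ n, u n ω) μ :=
    AEMeasurable.iInf fun n => (u n).aemeasurable
  set gf : Ω → ℝ := fun ω => ⨅ n, u n ω with hgf
  set g : Ω →ₘ[μ] ℝ := AEEqFun.mk gf hmeas.aestronglyMeasurable with hg
  have hgcoe : ⇑g =ᵐ[μ] gf := AEEqFun.coeFn_mk _ _
  have hconv : ∀ᵐ ω ∂μ, Tendsto (fun n => u n ω) atTop (nhds (g ω)) := by
    filter_upwards [hae, hgcoe] with ω hω hgω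
    obtain ⟨h1, h2⟩ := hω
    rw [hgω]
    exact tendsto_atTop_ciInf (antitone_nat_of_succ_le h1)
      ⟨b₀ ω, by rintro r ⟨n, rfl⟩; exact h2 n⟩
  have hIun : Tendsto (fun n => I (u n)) atTop (nhds L) := by
    have h1 : ∀ n, L ≤ I (u n) := fun n => hLle _ (huT n)
    have h2 : ∀ n, I (u n) ≤ L + 1/(n+1) := fun n => (hImono (hut n)).trans (htI n).le
    have h3 : Tendsto (fun n : ℕ => L + 1/((n:ℝ)+1)) atTop (nhds L) := by
      simpa using (tendsto_const_nhds (x := L)).add tendsto_one_div_add_atTop_nhds_zero_nat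
    exact tendsto_of_tendsto_of_tendsto_of_le_of_le tendsto_const_nhds h3 h1 h2
  have hbound : ∀ (f : Ω → ℝ), ∀ᵐ ω ∂μ, ‖Real.arctan (f ω)‖ ≤ π/2 := by
    intro f
    refine Eventually.of_forall fun ω => ?_
    rw [Real.norm_eq_abs, abs_le]
    exact ⟨le_of_lt (by simpa using Real.neg_pi_div_two_lt_arctan (f ω)),
      (Real.arctan_lt_pi_div_two _).le⟩
  have hIg : (∫ ω, Real.arctan (g ω) ∂μ) = L := by
    have hh := tendsto_integral_of_dominated_convergence (F := fun n ω => Real.arctan (u n ω))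
      (f := fun ω => Real.arctan (g ω)) (bound := fun _ => π/2)
      (fun n => Real.continuous_arctan.comp_aestronglyMeasurable (u n).aestronglyMeasurable)
      (integrable_const _)
      (fun n => hbound _)
      (by filter_upwards [hconv] with ω h using (Real.continuous_arctan.tendsto _).comp h)
    exact tendsto_nhds_unique hh hIun
  have hmin_meas : ∀ (c d : Ω →ₘ[μ] ℝ), Measurable (fun ω => min (c ω) (d ω)) := fun c d =>
    (c.stronglyMeasurable.measurable).min (d.stronglyMeasurable.measurable)
  have hglb_lb : ∀ c ∈ T, g ≤ c := by
    intro c hc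
    have hw : ∀ n, ∃ w ∈ T, w ≤ c ∧ w ≤ u n := fun n => hdir c hc _ (huT n)
    choose w hwT hwc hwu using hw
    have hJle : ∀ n, L ≤ ∫ ω, Real.arctan (min (c ω) (u n ω)) ∂μ := by
      intro n
      refine le_trans (hLle _ (hwT n)) (integral_mono_ae (hint _)
        (intArctan (hmin_meas c (u n)).aestronglyMeasurable) ?_)
      filter_upwards [AEEqFun.coeFn_le.2 (hwc n), AEEqFun.coeFn_le.2 (hwu n)] with ω h1 h2
      exact Real.arctan_strictMono.monotone (le_min h1 h2)
    have hJlim : Tendsto (fun n => ∫ ω, Real.arctan (min (c ω) (u n ω)) ∂μ) atTop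
        (nhds (∫ ω, Real.arctan (min (c ω) (g ω)) ∂μ)) := by
      refine tendsto_integral_of_dominated_convergence (bound := fun _ => π/2)
        (fun n => (Real.continuous_arctan.measurable.comp (hmin_meas c (u n))).aestronglyMeasurable)
        (integrable_const _) (fun n => hbound _) ?_
      filter_upwards [hconv] with ω h
      exact (Real.continuous_arctan.tendsto _).comp (tendsto_const_nhds.min h)
    have hge : L ≤ ∫ ω, Real.arctan (min (c ω) (g ω)) ∂μ :=
      ge_of_tendsto hJlim (Eventually.of_forall hJle)
    have hptle : ∀ ω, Real.arctan (min (c ω) (g ω)) ≤ Real.arctan (g ω) := fun ω =>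
      Real.arctan_strictMono.monotone (min_le_right _ _)
    have hintg := intArctan (μ := μ) g.aestronglyMeasurable
    have hintm := intArctan (μ := μ) (hmin_meas c g).aestronglyMeasurable
    have heqz : ∫ ω, (Real.arctan (g ω) - Real.arctan (min (c ω) (g ω))) ∂μ = 0 := by
      rw [integral_sub hintg hintm]
      have h1 : ∫ ω, Real.arctan (min (c ω) (g ω)) ∂μ ≤ ∫ ω, Real.arctan (g ω) ∂μ :=
        integral_mono_ae hintm hintg (Eventually.of_forall hptle)
      have h2 : ∫ ω, Real.arctan (g ω) ∂μ = L := hIg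
      linarith
    have hae0 := (integral_eq_zero_iff_of_nonneg_ae
      (Eventually.of_forall fun ω => sub_nonneg.2 (hptle ω)) (hintg.sub hintm)).1 heqz
    rw [← AEEqFun.coeFn_le]
    filter_upwards [hae0] with ω h
    have h' : Real.arctan (min (c ω) (g ω)) = Real.arctan (g ω) := by
      have : Real.arctan (g ω) - Real.arctan (min (c ω) (g ω)) = 0 := h
      linarith
    have := Real.arctan_injective h'
    exact min_eq_right_iff.1 this
  refine ⟨g, ⟨fun c hc => hglb_lb c hc, ?_⟩, u, huT, hanti, hconv⟩
  intro b hbT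
  rw [← AEEqFun.coeFn_le]
  have hb' : ∀ᵐ ω ∂μ, ∀ n, b ω ≤ u n ω := ae_all_iff.2 fun n => AEEqFun.coeFn_le.2 (hbT (huT n))
  filter_upwards [hb', hgcoe] with ω h hgω
  rw [hgω]; exact le_ciInf h

lemma exists_isLUB_directed (T : Set (Ω →ₘ[μ] ℝ)) (hne : T.Nonempty)
    (hdir : ∀ a ∈ T, ∀ b ∈ T, ∃ c ∈ T, a ≤ c ∧ b ≤ c)
    (b₀ : Ω →ₘ[μ] ℝ) (hb : ∀ c ∈ T, c ≤ b₀) : ∃ m, IsLUB T m := by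
  obtain ⟨g, hg, -⟩ := exists_isGLB_directed (Neg.neg '' T) (hne.image _)
    (by rintro _ ⟨a, ha, rfl⟩ _ ⟨c, hc, rfl⟩
        obtain ⟨d, hd, h1, h2⟩ := hdir a ha c hc
        exact ⟨-d, Set.mem_image_of_mem _ hd, neg_le_neg h1, neg_le_neg h2⟩)
    (-b₀) (by rintro _ ⟨c, hc, rfl⟩; exact neg_le_neg (hb c hc))
  refine ⟨-g, fun c hc => ?_, fun b hbU => ?_⟩
  · have h1 := hg.1 (Set.mem_image_of_mem Neg.neg hc)
    have h2 := neg_le_neg h1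
    simpa using h2
  · have h1 : -b ∈ lowerBounds (Neg.neg '' T) := by
      rintro _ ⟨c, hc, rfl⟩
      exact neg_le_neg (hbU hc)
    have h2 := neg_le_neg (hg.2 h1)
    simpa using h2

end L0x

end Aux3

/-- **Lemma 3.17.** -/
theorem dStar_strPos_of_tcClosed_ccp {Ω : Type*} [MeasurableSpace Ω] {μ : Measure Ω}
    [IsProbabilityMeasure μ] {𝕜 : Type*} [RCLike 𝕜] {E : Type*} [AddCommGroup E]
    [Module (Ω →ₘ[μ] 𝕜) E] {ι : Type*} (ν : ι → E → Ω →ₘ[μ] ℝ) (hν : IsRLCModule 𝕜 ν)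
    (x : E) (G : Set E) (hG : G.Nonempty) (hccp : HasCCP μ 𝕜 G)
    (hGclosed : @IsClosed E (tcTop ν) G)
    (hsep : ∀ (A : Set Ω) (hA : MeasurableSet A), 0 < μ A →
      ¬ ∃ y ∈ G, L0.ind μ 𝕜 A hA • x = L0.ind μ 𝕜 A hA • y) :
    ∃ m : Ω →ₘ[μ] ℝ,
      IsLUB {c | ∃ (Q : Finset ι) (hQ : Q.Nonempty) (c' : Ω →ₘ[μ] ℝ),
        IsGLB {c'' | ∃ y ∈ G, c'' = nQ ν Q hQ (x - y)} c' ∧ c = c' ⊓ 1} m ∧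
      L0.StrPos m := by
  classical
  obtain ⟨y₀, hy₀⟩ := hG
  cases isEmpty_or_nonempty ι with
  | inl hemp =>
    exfalso
    have h1 : x = 0 := hν.separating x (fun i => (hemp.elim i))
    have h2 : y₀ = 0 := hν.separating y₀ (fun i => (hemp.elim i))
    refine hsep Set.univ MeasurableSet.univ (by simp) ⟨y₀, hy₀, by rw [h1, h2]⟩
  | inr hι =>
    obtain ⟨i0⟩ := hι
    -- the families and their GLBs
    have hdirTQ : ∀ (Q : Finset ι) (hQ : Q.Nonempty),
        ∀ a ∈ {c'' | ∃ y ∈ G, c'' = nQ ν Q hQ (x - y)},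
        ∀ b ∈ {c'' | ∃ y ∈ G, c'' = nQ ν Q hQ (x - y)},
        ∃ c ∈ {c'' | ∃ y ∈ G, c'' = nQ ν Q hQ (x - y)}, c ≤ a ∧ c ≤ b := by
      rintro Q hQ _ ⟨y, hy, rfl⟩ _ ⟨z, hz, rfl⟩
      set B := {ω | nQ ν Q hQ (x - y) ω ≤ nQ ν Q hQ (x - z) ω} with hB
      have hBm : MeasurableSet B :=
        measurableSet_le (nQ ν Q hQ (x - y)).stronglyMeasurable.measurable
          (nQ ν Q hQ (x - z)).stronglyMeasurable.measurable
      obtain ⟨w, hwG, hw1, hw2⟩ := L0x.glue_two hccp hy hz hBm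
      have e1 : L0.ind μ 𝕜 B hBm • (x - w) = L0.ind μ 𝕜 B hBm • (x - y) := by
        rw [smul_sub, smul_sub, hw1]
      have e2 : L0.ind μ 𝕜 Bᶜ hBm.compl • (x - w) = L0.ind μ 𝕜 Bᶜ hBm.compl • (x - z) := by
        rw [smul_sub, smul_sub, hw2]
      have k1 := L0x.nQ_eqOn hν hBm e1 Q hQ
      have k2 := L0x.nQ_eqOn hν hBm.compl e2 Q hQ
      refine ⟨nQ ν Q hQ (x - w), ⟨w, hwG, rfl⟩, ?_, ?_⟩ <;> rw [← AEEqFun.coeFn_le] <;>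
        filter_upwards [k1, k2] with ω f1 f2
      · by_cases hω : ω ∈ B
        · rw [f1 hω]
        · rw [f2 hω]
          exact (not_le.1 hω).le
      · by_cases hω : ω ∈ B
        · rw [f1 hω]; exact hω
        · rw [f2 hω]
    have hglbQ : ∀ (Q : Finset ι) (hQ : Q.Nonempty),
        ∃ g, IsGLB {c'' | ∃ y ∈ G, c'' = nQ ν Q hQ (x - y)} g ∧
          ∃ u : ℕ → (Ω →ₘ[μ] ℝ), (∀ n, u n ∈ {c'' | ∃ y ∈ G, c'' = nQ ν Q hQ (x - y)}) ∧
            (∀ n, u (n+1) ≤ u n) ∧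
            ∀ᵐ ω ∂μ, Filter.Tendsto (fun n => u n ω) Filter.atTop (nhds (g ω)) := by
      intro Q hQ
      refine L0x.exists_isGLB_directed _ ⟨nQ ν Q hQ (x - y₀), ⟨y₀, hy₀, rfl⟩⟩ (hdirTQ Q hQ) 0 ?_
      rintro _ ⟨y, hy, rfl⟩
      exact L0x.nQ_nonneg hν Q hQ _
    choose dQ hdQ uQ huQT huQanti huQconv using hglbQ
    have hdQnonneg : ∀ (Q : Finset ι) (hQ : Q.Nonempty), (0 : Ω →ₘ[μ] ℝ) ≤ dQ Q hQ := by
      intro Q hQ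
      refine (hdQ Q hQ).2 ?_
      rintro _ ⟨y, hy, rfl⟩
      exact L0x.nQ_nonneg hν Q hQ _
    -- rewrite the index set
    have hSeq : {c | ∃ (Q : Finset ι) (hQ : Q.Nonempty) (c' : Ω →ₘ[μ] ℝ),
        IsGLB {c'' | ∃ y ∈ G, c'' = nQ ν Q hQ (x - y)} c' ∧ c = c' ⊓ 1}
        = {c | ∃ (Q : Finset ι) (hQ : Q.Nonempty), c = dQ Q hQ ⊓ 1} := by
      ext c
      constructor
      · rintro ⟨Q, hQ, c', hc', rfl⟩
        exact ⟨Q, hQ, by rw [hc'.unique (hdQ Q hQ)]⟩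
      · rintro ⟨Q, hQ, rfl⟩
        exact ⟨Q, hQ, dQ Q hQ, hdQ Q hQ, rfl⟩
    rw [hSeq]
    -- monotonicity of dQ in Q
    have hdQmono : ∀ (Q Q' : Finset ι) (hQ : Q.Nonempty) (hQ' : Q'.Nonempty), Q ⊆ Q' →
        dQ Q hQ ≤ dQ Q' hQ' := by
      intro Q Q' hQ hQ' hss
      refine (hdQ Q' hQ').2 ?_
      rintro _ ⟨y, hy, rfl⟩
      exact le_trans ((hdQ Q hQ).1 ⟨y, hy, rfl⟩) (L0x.nQ_mono hQ hss _)
    -- the LUB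
    obtain ⟨m, hm⟩ := L0x.exists_isLUB_directed
      {c | ∃ (Q : Finset ι) (hQ : Q.Nonempty), c = dQ Q hQ ⊓ 1}
      ⟨dQ {i0} (Finset.singleton_nonempty i0) ⊓ 1, {i0}, Finset.singleton_nonempty i0, rfl⟩
      (by rintro _ ⟨Q1, h1, rfl⟩ _ ⟨Q2, h2, rfl⟩
          refine ⟨dQ (Q1 ∪ Q2) (h1.mono Finset.subset_union_left) ⊓ 1,
            ⟨Q1 ∪ Q2, h1.mono Finset.subset_union_left, rfl⟩,
            inf_le_inf_right 1 (hdQmono _ _ _ _ Finset.subset_union_left),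
            inf_le_inf_right 1 (hdQmono _ _ _ _ Finset.subset_union_right)⟩)
      1 (by rintro _ ⟨Q, hQ, rfl⟩; exact inf_le_right)
    refine ⟨m, hm, ?_⟩
    -- strict positivity
    by_contra hcon
    set A := {ω | m ω ≤ 0} with hA
    have hAm : MeasurableSet A :=
      measurableSet_le m.stronglyMeasurable.measurable measurable_const
    have hμA : 0 < μ A := by
      rw [pos_iff_ne_zero]
      intro h0
      apply hcon
      refine ae_iff.2 ?_
      rw [hA] at h0
      simpa [not_lt] using h0
    -- dQ vanishes a.e. on A
    have hdQ0 : ∀ (Q : Finset ι) (hQ : Q.Nonempty), ∀ᵐ ω ∂μ, ω ∈ A → dQ Q hQ ω = 0 := by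
      intro Q hQ
      have h1 : dQ Q hQ ⊓ 1 ≤ m := hm.1 ⟨Q, hQ, rfl⟩
      filter_upwards [AEEqFun.coeFn_le.2 h1, AEEqFun.coeFn_le.2 (hdQnonneg Q hQ),
        AEEqFun.coeFn_inf (dQ Q hQ) 1, AEEqFun.coeFn_one (β := ℝ) (μ := μ),
        AEEqFun.coeFn_zero (β := ℝ) (μ := μ)] with ω e1 e2 e3 e4 e5 hmem
      rw [hA, Set.mem_setOf_eq] at hmem
      rw [e3] at e1
      rw [e5] at e2
      have h6 : min (dQ Q hQ ω) ((1 : Ω →ₘ[μ] ℝ) ω) ≤ 0 := le_trans e1 hmem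
      rw [e4] at h6
      rcases min_le_iff.1 h6 with h7 | h7
      · exact le_antisymm h7 e2
      · exfalso; simp at h7; linarith
    -- the candidate point z
    set z : E := L0.ind μ 𝕜 A hAm • x + L0.ind μ 𝕜 Aᶜ hAm.compl • y₀ with hz
    have hvsplit : ∀ v : E, L0.ind μ 𝕜 A hAm • v + L0.ind μ 𝕜 Aᶜ hAm.compl • v = v := by
      intro v
      rw [← add_smul, L0x.ind_add_compl, one_smul]
    have hdecomp : ∀ v : E,
        z - v = L0.ind μ 𝕜 A hAm • (x - v) + L0.ind μ 𝕜 Aᶜ hAm.compl • (y₀ - v) := by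
      intro v
      conv_lhs => rw [hz, show v = L0.ind μ 𝕜 A hAm • v + L0.ind μ 𝕜 Aᶜ hAm.compl • v from
        (hvsplit v).symm]
      rw [smul_sub, smul_sub]
      abel
    have hzG : z ∈ G := by
      by_contra hzG
      have hopen : ∀ a ∈ Gᶜ, Gᶜ ∈ tcNhd ν a := hGclosed.isOpen_compl
      have hball := hopen z hzG
      rw [tcNhd] at hball
      rw [← iInf_prod (f := fun p : {Q : Finset ι // Q.Nonempty} ×
        {ε : Ω →ₘ[μ] ℝ // L0.StrPos ε} =>
          Filter.principal {y : E | nQ ν p.1.1 p.1.2 (y - z) ≤ p.2.1})] at hball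
      have hone : L0.StrPos (1 : Ω →ₘ[μ] ℝ) := by
        filter_upwards [AEEqFun.coeFn_one (β := ℝ) (μ := μ)] with ω e
        rw [e]; norm_num
      haveI : Nonempty ({Q : Finset ι // Q.Nonempty} × {ε : Ω →ₘ[μ] ℝ // L0.StrPos ε}) :=
        ⟨⟨⟨{i0}, Finset.singleton_nonempty i0⟩, ⟨1, hone⟩⟩⟩
      have hdirF : Directed (· ≥ ·) (fun p : {Q : Finset ι // Q.Nonempty} ×
          {ε : Ω →ₘ[μ] ℝ // L0.StrPos ε} =>
          Filter.principal {y : E | nQ ν p.1.1 p.1.2 (y - z) ≤ p.2.1}) := by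
        rintro ⟨⟨Q1, h1⟩, ⟨e1, he1⟩⟩ ⟨⟨Q2, h2⟩, ⟨e2, he2⟩⟩
        refine ⟨⟨⟨Q1 ∪ Q2, h1.mono Finset.subset_union_left⟩,
          ⟨e1 ⊓ e2, L0x.strPos_inf he1 he2⟩⟩,
          Filter.principal_mono.2 fun w hw => ?_, Filter.principal_mono.2 fun w hw => ?_⟩
        · exact le_trans (le_trans (L0x.nQ_mono h1 Finset.subset_union_left _) hw) inf_le_left
        · exact le_trans (le_trans (L0x.nQ_mono h2 Finset.subset_union_right _) hw) inf_le_right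
      rw [Filter.mem_iInf_of_directed hdirF] at hball
      obtain ⟨⟨⟨Q, hQ⟩, ⟨ε, hε⟩⟩, hball⟩ := hball
      rw [Filter.mem_principal] at hball
      -- construct an element of G inside the ball
      choose y' hy'G hy'eq using huQT Q hQ
      set An : ℕ → Set Ω := fun n => A ∩ {ω | (uQ Q hQ n) ω ≤ ε ω} with hAn
      have hAnm : ∀ n, MeasurableSet (An n) := fun n =>
        hAm.inter (measurableSet_le (uQ Q hQ n).stronglyMeasurable.measurable
          ε.stronglyMeasurable.measurable)
      set D : ℕ → Set Ω := disjointed An with hD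
      have hDm : ∀ n, MeasurableSet (D n) := MeasurableSet.disjointed hAnm
      set N : Set Ω := A \ ⋃ n, An n with hN
      have hNm : MeasurableSet N := hAm.diff (MeasurableSet.iUnion hAnm)
      have hNnull : μ N = 0 := by
        rw [measure_eq_zero_iff_ae_notMem]
        filter_upwards [huQconv Q hQ, hdQ0 Q hQ, hε] with ω c1 c2 c3
        intro hωN
        obtain ⟨hωA, hωU⟩ := hωN
        rw [c2 hωA] at c1
        obtain ⟨n, hn⟩ := (c1.eventually_lt_const c3).exists
        exact hωU (Set.mem_iUnion.2 ⟨n, hωA, hn.le⟩)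
      set C : ℕ → Set Ω := fun n => match n with
        | 0 => Aᶜ ∪ N
        | (k+1) => D k
        with hC
      have hDsubA : ∀ k, D k ⊆ A := fun k =>
        (disjointed_subset An k).trans Set.inter_subset_left
      have hCD : IsMeasPartition C := by
        refine ⟨fun n => ?_, fun a b hab => ?_, ?_⟩
        · cases n with
          | zero => exact hAm.compl.union hNm
          | succ k => exact hDm k
        · have key : ∀ k, Disjoint (Aᶜ ∪ N) (D k) := by
            intro k
            rw [Set.disjoint_union_left]
            constructor
            · exact disjoint_compl_left.mono_right (hDsubA k)
            · exact Set.disjoint_sdiff_left.mono_right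
                ((disjointed_subset An k).trans (Set.subset_iUnion An k))
          cases a with
          | zero => cases b with
            | zero => exact absurd rfl hab
            | succ k => exact key k
          | succ k => cases b with
            | zero => exact (key k).symm
            | succ l => exact disjoint_disjointed An (fun h => hab (by rw [h]))
        · ext ω
          simp only [Set.mem_iUnion, Set.mem_univ, iff_true]
          by_cases hωA : ω ∈ A
          · by_cases hωU : ω ∈ ⋃ n, An n
            · rw [← iUnion_disjointed] at hωU
              obtain ⟨k, hk⟩ := Set.mem_iUnion.1 hωU
              exact ⟨k + 1, hk⟩
            · exact ⟨0, Or.inr ⟨hωA, hωU⟩⟩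
          · exact ⟨0, Or.inl hωA⟩
      set ys : ℕ → E := fun n => match n with
        | 0 => y₀
        | (k+1) => y' k
        with hys
      obtain ⟨y, hyG, hy⟩ := hccp C hCD ys (fun n => by
        cases n with
        | zero => exact hy₀
        | succ k => exact hy'G k)
      have hbound : ∀ v : E, nQ ν Q hQ (z - v) ≤
          L0.abs (L0.ind μ 𝕜 A hAm) * nQ ν Q hQ (x - v)
          + L0.abs (L0.ind μ 𝕜 Aᶜ hAm.compl) * nQ ν Q hQ (y₀ - v) := by
        intro v
        rw [hdecomp v]
        refine le_trans (L0x.nQ_add_le hν Q hQ _ _) ?_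
        rw [L0x.nQ_smul hν, L0x.nQ_smul hν]
      have hpiece : ∀ᵐ ω ∂μ, ∀ n, ω ∈ C n →
          nQ ν Q hQ (z - y) ω = nQ ν Q hQ (z - ys n) ω := by
        rw [MeasureTheory.ae_all_iff]
        intro n
        have e : L0.ind μ 𝕜 (C n) (hCD.meas n) • (z - y)
            = L0.ind μ 𝕜 (C n) (hCD.meas n) • (z - ys n) := by
          rw [smul_sub, smul_sub, hy n]
        exact L0x.nQ_eqOn hν (hCD.meas n) e Q hQ
      have hbnd : ∀ᵐ ω ∂μ, ∀ n, nQ ν Q hQ (z - ys n) ω ≤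
          A.indicator (fun _ => (1:ℝ)) ω * nQ ν Q hQ (x - ys n) ω
          + Aᶜ.indicator (fun _ => (1:ℝ)) ω * nQ ν Q hQ (y₀ - ys n) ω := by
        rw [MeasureTheory.ae_all_iff]
        intro n
        filter_upwards [AEEqFun.coeFn_le.2 (hbound (ys n)),
          AEEqFun.coeFn_add (L0.abs (L0.ind μ 𝕜 A hAm) * nQ ν Q hQ (x - ys n))
            (L0.abs (L0.ind μ 𝕜 Aᶜ hAm.compl) * nQ ν Q hQ (y₀ - ys n)),
          AEEqFun.coeFn_mul (L0.abs (L0.ind μ 𝕜 A hAm)) (nQ ν Q hQ (x - ys n)),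
          AEEqFun.coeFn_mul (L0.abs (L0.ind μ 𝕜 Aᶜ hAm.compl)) (nQ ν Q hQ (y₀ - ys n)),
          L0x.abs_ind_coeFn (𝕜 := 𝕜) A hAm, L0x.abs_ind_coeFn (𝕜 := 𝕜) Aᶜ hAm.compl]
          with ω e1 e2 e3 e4 e5 e6
        rw [e2, Pi.add_apply, e3, e4, Pi.mul_apply, Pi.mul_apply, e5, e6] at e1
        exact e1
      have hy'eqω : ∀ᵐ ω ∂μ, ∀ n, nQ ν Q hQ (x - y' n) ω = uQ Q hQ n ω :=
        MeasureTheory.ae_all_iff.2 fun n =>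
          Filter.Eventually.of_forall fun ω => by rw [← hy'eq n]
      have hzeroω : ∀ᵐ ω ∂μ, nQ ν Q hQ (y₀ - y₀) ω = 0 := by
        have h0 : nQ ν Q hQ (y₀ - y₀) = 0 := by rw [sub_self]; exact L0x.nQ_zero hν Q hQ
        filter_upwards [AEEqFun.coeFn_zero (β := ℝ) (μ := μ)] with ω e
        rw [h0, e, Pi.zero_apply]
      have hfin : nQ ν Q hQ (y - z) ≤ ε := by
        have h1 : nQ ν Q hQ (z - y) ≤ ε := by
          rw [← AEEqFun.coeFn_le]
          have hcov : ∀ ω, ∃ n, ω ∈ C n := by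
            intro ω
            have hmem : ω ∈ ⋃ n, C n := hCD.cover ▸ Set.mem_univ ω
            exact Set.mem_iUnion.1 hmem
          filter_upwards [hpiece, hbnd, hy'eqω, hzeroω, hε,
            measure_eq_zero_iff_ae_notMem.1 hNnull] with ω p1 p2 p3 p4 p5 p6
          obtain ⟨n, hn⟩ := hcov ω
          rw [p1 n hn]
          refine le_trans (p2 n) ?_
          cases n with
          | zero =>
            have hωAc : ω ∈ Aᶜ := by
              rcases hn with h | h
              · exact h
              · exact absurd h p6
            rw [Set.indicator_of_notMem hωAc, Set.indicator_of_mem hωAc]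
            rw [show ys 0 = y₀ from rfl, p4]
            simpa using p5.le
          | succ k =>
            have hωD : ω ∈ D k := hn
            have hωAn : ω ∈ An k := disjointed_subset An k hωD
            have hωA : ω ∈ A := hωAn.1
            have hωle : (uQ Q hQ k) ω ≤ ε ω := hωAn.2
            rw [Set.indicator_of_mem hωA,
              Set.indicator_of_notMem (show ω ∉ Aᶜ from fun hc => hc hωA)]
            rw [show ys (k+1) = y' k from rfl, one_mul, zero_mul, add_zero, p3 k]
            exact hωle
        have h2 : nQ ν Q hQ (y - z) = nQ ν Q hQ (z - y) := by
          rw [show y - z = -(z - y) from (neg_sub z y).symm, L0x.nQ_neg hν]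
        rw [h2]; exact h1
      exact (hball hfin) hyG
    refine hsep A hAm hμA ⟨z, hzG, ?_⟩
    rw [hz, smul_add, smul_smul, smul_smul, L0x.ind_mul_ind, L0x.ind_mul_ind]
    have hAA : L0.ind μ 𝕜 (A ∩ A) (hAm.inter hAm) = L0.ind μ 𝕜 A hAm := by
      congr 1
      exact Set.inter_self A
    have hAAc : L0.ind μ 𝕜 (A ∩ Aᶜ) (hAm.inter hAm.compl) = 0 := by
      have h9 : A ∩ Aᶜ = (∅ : Set Ω) := Set.inter_compl_self A
      rw [show L0.ind μ 𝕜 (A ∩ Aᶜ) (hAm.inter hAm.compl)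
        = L0.ind μ 𝕜 (∅ : Set Ω) (by rw [← h9]; exact hAm.inter hAm.compl) by congr 1,
        L0x.ind_empty]
    rw [hAA, hAAc, zero_smul, add_zero]
end

section
/- Every random locally convex module (E,P) that is complete in the (ε,λ)-topology has the countable concatenation property: for every countable measurable partition {Aₙ : n ∈ ℕ} of Ω and every sequence {xₙ} in E, there exists x ∈ E with 1_{Aₙ}·x = 1_{Aₙ}·xₙ for all n. -/
open MeasureTheory

section Helpers

variable {Ω : Type*} [MeasurableSpace Ω] {μ : Measure Ω} {𝕜 : Type*} [RCLike 𝕜]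

lemma L0.ind_congr {A B : Set Ω} (hAB : A = B) (hA : MeasurableSet A) (hB : MeasurableSet B) :
    L0.ind μ 𝕜 A hA = L0.ind μ 𝕜 B hB := by subst hAB; rfl

lemma L0.ind_mul_ind {A B : Set Ω} (hA : MeasurableSet A) (hB : MeasurableSet B) :
    L0.ind μ 𝕜 A hA * L0.ind μ 𝕜 B hB = L0.ind μ 𝕜 (A ∩ B) (hA.inter hB) := by
  unfold L0.ind
  rw [MeasureTheory.AEEqFun.mk_mul_mk]
  apply MeasureTheory.AEEqFun.ext
  apply Filter.EventuallyEq.trans (MeasureTheory.AEEqFun.coeFn_mk _ _)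
  apply Filter.EventuallyEq.trans _ (MeasureTheory.AEEqFun.coeFn_mk _ _).symm
  apply Filter.Eventually.of_forall
  intro ω
  by_cases h1 : ω ∈ A <;> by_cases h2 : ω ∈ B <;>
    simp [Set.indicator_apply, h1, h2, Set.mem_inter_iff]

lemma L0.ind_empty (h : MeasurableSet (∅ : Set Ω)) : L0.ind μ 𝕜 ∅ h = 0 := by
  unfold L0.ind
  apply MeasureTheory.AEEqFun.ext
  apply Filter.EventuallyEq.trans (MeasureTheory.AEEqFun.coeFn_mk _ _)
  filter_upwards [MeasureTheory.AEEqFun.coeFn_zero (β := 𝕜) (μ := μ)] with ω hω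
  simp [hω]

lemma L0.abs_ind {A : Set Ω} (hA : MeasurableSet A) :
    L0.abs (L0.ind μ 𝕜 A hA) = L0.ind μ ℝ A hA := by
  unfold L0.abs L0.ind
  rw [MeasureTheory.AEEqFun.comp_mk]
  apply MeasureTheory.AEEqFun.ext
  apply Filter.EventuallyEq.trans (MeasureTheory.AEEqFun.coeFn_mk _ _)
  apply Filter.EventuallyEq.trans _ (MeasureTheory.AEEqFun.coeFn_mk _ _).symm
  apply Filter.Eventually.of_forall
  intro ω
  by_cases h1 : ω ∈ A <;> simp [Set.indicator_apply, h1, Function.comp]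

lemma L0.abs_neg_one : L0.abs (-1 : Ω →ₘ[μ] 𝕜) = 1 := by
  unfold L0.abs
  rw [MeasureTheory.AEEqFun.one_def, MeasureTheory.AEEqFun.neg_mk,
    MeasureTheory.AEEqFun.comp_mk]
  apply MeasureTheory.AEEqFun.ext
  apply Filter.EventuallyEq.trans (MeasureTheory.AEEqFun.coeFn_mk _ _)
  apply Filter.EventuallyEq.trans _ (MeasureTheory.AEEqFun.coeFn_mk _ _).symm
  apply Filter.Eventually.of_forall
  intro ω
  simp [Function.comp]

/-- coeFn of `L0.ind` over ℝ. -/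
lemma L0.ind_coeFn (A : Set Ω) (hA : MeasurableSet A) :
    (L0.ind μ ℝ A hA : Ω → ℝ) =ᵐ[μ] A.indicator fun _ => (1:ℝ) :=
  MeasureTheory.AEEqFun.coeFn_mk _ _

end Helpers

/-- **Example 3.7.** Every random locally convex module `(E,P)` that is complete in the
`(ε,λ)`-topology has the countable concatenation property: for every countable measurable
partition `{Aₙ}` of `Ω` and every sequence `{xₙ}` in `E` there is `x ∈ E` with
`1_{Aₙ}·x = 1_{Aₙ}·xₙ` for every `n`. -/
theorem ccp_of_elComplete {Ω : Type*} [MeasurableSpace Ω] {μ : Measure Ω}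
    [IsProbabilityMeasure μ] {𝕜 : Type*} [RCLike 𝕜] {E : Type*} [AddCommGroup E]
    [Module (Ω →ₘ[μ] 𝕜) E] {ι : Type*} (ν : ι → E → Ω →ₘ[μ] ℝ) (hν : IsRLCModule 𝕜 ν)
    (hcomp : ElComplete ν) : HasCCP μ 𝕜 (Set.univ : Set E) := by
  classical
  intro A hA x _
  let indK : ℕ → (Ω →ₘ[μ] 𝕜) := fun n => L0.ind μ 𝕜 (A n) (hA.meas n)
  let s : ℕ → E := fun k => ∑ n ∈ Finset.range k, indK n • x n
  have nu_neg : ∀ i (y : E), ν i (-y) = ν i y := by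
    intro i y
    rw [← neg_one_smul (Ω →ₘ[μ] 𝕜) y, hν.smul, L0.abs_neg_one, one_mul]
  have hnQ_neg : ∀ (Q : Finset ι) (hQ : Q.Nonempty) (y : E),
      nQ ν Q hQ (-y) = nQ ν Q hQ y := by
    intro Q hQ y
    exact Finset.sup'_congr hQ rfl fun i _ => nu_neg i y
  have hnQ_nonneg : ∀ (Q : Finset ι) (hQ : Q.Nonempty) (y : E),
      (0 : Ω →ₘ[μ] ℝ) ≤ nQ ν Q hQ y := by
    intro Q hQ y
    obtain ⟨i, hi⟩ := hQ
    exact le_trans (hν.nonneg i y) (Finset.le_sup' (fun i => ν i y) hi)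
  have hKdisj : ∀ {n m : ℕ}, n ≠ m → indK n * indK m = 0 := by
    intro n m h
    rw [show indK n * indK m = _ from L0.ind_mul_ind (hA.meas n) (hA.meas m),
      L0.ind_congr (Set.disjoint_iff_inter_eq_empty.mp (hA.disj h)) _ MeasurableSet.empty]
    exact L0.ind_empty _
  have hKidem : ∀ n : ℕ, indK n * indK n = indK n := by
    intro n
    rw [show indK n * indK n = _ from L0.ind_mul_ind (hA.meas n) (hA.meas n)]
    exact L0.ind_congr (Set.inter_self _) _ _
  have hsmul_s : ∀ {n k : ℕ}, n < k → indK n • s k = indK n • x n := by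
    intro n k hnk
    show indK n • ∑ m ∈ Finset.range k, indK m • x m = _
    rw [Finset.smul_sum]
    rw [Finset.sum_eq_single n
      (fun m _ hne => by rw [smul_smul, hKdisj (Ne.symm hne), zero_smul])
      (fun hn => absurd (Finset.mem_range.mpr hnk) hn)]
    rw [smul_smul, hKidem]
  -- key estimate: outside the union, partial-sum differences have zero seminorm
  have key : ∀ (Q : Finset ι) (hQ : Q.Nonempty) (j k : ℕ), j ≤ k →
      ∀ᵐ ω ∂μ, ω ∉ (⋃ n ∈ Finset.Ico j k, A n) → nQ ν Q hQ (s k - s j) ω = 0 := by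
    intro Q hQ j k hjk
    have hBm : MeasurableSet (⋃ n ∈ Finset.Ico j k, A n) :=
      (Finset.Ico j k).measurableSet_biUnion (fun n _ => hA.meas n)
    set B : Set Ω := ⋃ n ∈ Finset.Ico j k, A n
    set y : E := s k - s j with hy_def
    have hy : y = ∑ n ∈ Finset.Ico j k, indK n • x n :=
      (Finset.sum_Ico_eq_sub _ hjk).symm
    have habs : L0.ind μ 𝕜 B hBm • y = y := by
      rw [hy, Finset.smul_sum]
      refine Finset.sum_congr rfl fun n hn => ?_
      rw [smul_smul, L0.ind_mul_ind hBm (hA.meas n),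
        L0.ind_congr (Set.inter_eq_right.mpr ?_) _ (hA.meas n)]
      intro ω hω
      exact Set.mem_iUnion₂.mpr ⟨n, hn, hω⟩
    have hb : nQ ν Q hQ y ≤ L0.ind μ ℝ B hBm * nQ ν Q hQ y := by
      apply Finset.sup'_le
      intro i hi
      have h1 : ν i y = L0.ind μ ℝ B hBm * ν i y := by
        conv_lhs => rw [← habs]
        rw [hν.smul, L0.abs_ind]
      rw [h1, ← MeasureTheory.AEEqFun.coeFn_le]
      filter_upwards [MeasureTheory.AEEqFun.coeFn_mul (L0.ind μ ℝ B hBm) (ν i y),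
        MeasureTheory.AEEqFun.coeFn_mul (L0.ind μ ℝ B hBm) (nQ ν Q hQ y),
        L0.ind_coeFn B hBm,
        MeasureTheory.AEEqFun.coeFn_le.mpr (Finset.le_sup' (fun i => ν i y) hi)]
        with ω e1 e2 e3 e4
      rw [e1, e2]
      simp only [Pi.mul_apply]
      rw [e3]
      by_cases hω : ω ∈ B
      · simpa [Set.indicator_apply, hω, nQ] using e4
      · simp [Set.indicator_apply, hω]
    filter_upwards [MeasureTheory.AEEqFun.coeFn_le.mpr hb,
      MeasureTheory.AEEqFun.coeFn_le.mpr (hnQ_nonneg Q hQ y),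
      MeasureTheory.AEEqFun.coeFn_mul (L0.ind μ ℝ B hBm) (nQ ν Q hQ y),
      L0.ind_coeFn B hBm,
      MeasureTheory.AEEqFun.coeFn_zero (β := ℝ) (μ := μ)] with ω e1 e2 e3 e4 e5
    intro hω
    have hle : nQ ν Q hQ y ω ≤ 0 := by
      have := e1.trans (le_of_eq e3)
      simp only [Pi.mul_apply] at this
      rw [e4] at this
      simpa [Set.indicator_apply, hω] using this
    have hge : 0 ≤ nQ ν Q hQ y ω := by
      have := e2
      rw [e5] at this
      simpa using this
    exact le_antisymm hle hge
  -- tail sets of the partition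
  have hTm : ∀ j : ℕ, MeasurableSet (⋃ (n : ℕ) (_ : j ≤ n), A n) :=
    fun j => MeasurableSet.iUnion fun n => MeasurableSet.iUnion fun _ => hA.meas n
  have hTanti : Antitone (fun j => ⋃ (n : ℕ) (_ : j ≤ n), A n) := by
    intro a b hab
    refine Set.iUnion₂_subset fun n hn => ?_
    exact Set.subset_iUnion₂ (s := fun n _ => A n) n (le_trans hab hn)
  have hTempty : (⋂ j, ⋃ (n : ℕ) (_ : j ≤ n), A n) = ∅ := by
    ext ω
    simp only [Set.mem_iInter, Set.mem_empty_iff_false, iff_false]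
    intro h
    have hω : ω ∈ ⋃ n, A n := hA.cover ▸ Set.mem_univ ω
    obtain ⟨n₀, hn₀⟩ := Set.mem_iUnion.mp hω
    obtain ⟨m, hm, hωm⟩ := Set.mem_iUnion₂.mp (h (n₀ + 1))
    exact Set.disjoint_left.mp (hA.disj (by omega : m ≠ n₀)) hωm hn₀
  have htail : ∀ l : ℝ, 0 < l → ∃ j₀ : ℕ,
      μ (⋃ (n : ℕ) (_ : j₀ ≤ n), A n) < ENNReal.ofReal l := by
    intro l hl
    have ht := tendsto_measure_iInter_atTop (μ := μ)
      (fun j => (hTm j).nullMeasurableSet) hTanti ⟨0, measure_ne_top μ _⟩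
    rw [hTempty] at ht
    simp only [measure_empty] at ht
    exact (ht.eventually_lt_const (ENNReal.ofReal_pos.mpr hl)).exists
  -- Cauchy
  have hCauchy : ElCauchy ν s := by
    intro Q hQ e l he hl hl1
    obtain ⟨j₀, hj₀⟩ := htail l hl
    refine ⟨j₀, ?_⟩
    have main : ∀ j k, j₀ ≤ j → j ≤ k →
        (μ {ω | nQ ν Q hQ (s k - s j) ω < e}).toReal > 1 - l := by
      intro j k hj hjk
      have hBm : MeasurableSet (⋃ n ∈ Finset.Ico j k, A n) :=
        (Finset.Ico j k).measurableSet_biUnion (fun n _ => hA.meas n)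
      set B : Set Ω := ⋃ n ∈ Finset.Ico j k, A n
      have hBsub : B ⊆ ⋃ (n : ℕ) (_ : j₀ ≤ n), A n := by
        intro ω hω
        obtain ⟨n, hn, h⟩ := Set.mem_iUnion₂.mp hω
        exact Set.mem_iUnion₂.mpr ⟨n, le_trans hj (Finset.mem_Ico.mp hn).1, h⟩
      have hsub : Bᶜ ≤ᵐ[μ] {ω | nQ ν Q hQ (s k - s j) ω < e} := by
        filter_upwards [key Q hQ j k hjk] with ω h hω
        show nQ ν Q hQ (s k - s j) ω < e
        rw [h hω]
        exact he
      have h1 : μ Bᶜ ≤ μ {ω | nQ ν Q hQ (s k - s j) ω < e} := measure_mono_ae hsub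
      have h2 : μ Bᶜ = 1 - μ B := by
        rw [measure_compl hBm (measure_ne_top μ _), measure_univ]
      have h4 : (μ B).toReal < l :=
        ENNReal.toReal_lt_of_lt_ofReal (lt_of_le_of_lt (measure_mono hBsub) hj₀)
      have h5 : (μ Bᶜ).toReal = 1 - (μ B).toReal := by
        rw [h2, ENNReal.toReal_sub_of_le prob_le_one ENNReal.one_ne_top, ENNReal.toReal_one]
      have h6 : (μ Bᶜ).toReal ≤ (μ {ω | nQ ν Q hQ (s k - s j) ω < e}).toReal :=
        ENNReal.toReal_mono (measure_ne_top μ _) h1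
      linarith
    intro j k hj hk
    rcases le_total j k with h | h
    · have heq : nQ ν Q hQ (s j - s k) = nQ ν Q hQ (s k - s j) := by
        rw [← neg_sub (s k) (s j), hnQ_neg]
      rw [show (fun ω => nQ ν Q hQ (s j - s k) ω < e) = fun ω => nQ ν Q hQ (s k - s j) ω < e
        from by rw [heq]]
      exact main j k hj h
    · exact main k j hk h
  letI : Preorder (ULift ℕ) := Preorder.lift ULift.down
  haveI hdir : IsDirected (ULift ℕ) (· ≤ ·) := by
    constructor
    intro a b
    exact ⟨⟨max a.down b.down⟩, le_max_left a.down b.down, le_max_right a.down b.down⟩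
  have hCauchy' : ElCauchy ν (fun j : ULift ℕ => s j.down) := by
    intro Q hQ e l he hl hl1
    obtain ⟨j₀, h⟩ := hCauchy Q hQ e l he hl hl1
    exact ⟨⟨j₀⟩, fun j k hj hk => h j.down k.down hj hk⟩
  obtain ⟨x₀, hx₀⟩ := hcomp (ULift ℕ) inferInstance hdir ⟨⟨0⟩⟩
    (fun j => s j.down) hCauchy'
  refine ⟨x₀, Set.mem_univ _, fun n => ?_⟩
  have hsep : indK n • (x₀ - x n) = 0 := by
    apply hν.separating
    intro i
    set g := ν i (indK n • (x₀ - x n)) with hg_def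
    have hg0 : (0 : Ω →ₘ[μ] ℝ) ≤ g := hν.nonneg _ _
    have hbound : ∀ k, n < k → g ≤ ν i (s k - x₀) := by
      intro k hk
      have h1 : indK n • (x₀ - x n) = indK n • (-(s k - x₀)) := by
        rw [neg_sub, smul_sub, smul_sub, hsmul_s hk]
      have h2 : g = L0.ind μ ℝ (A n) (hA.meas n) * ν i (s k - x₀) := by
        rw [hg_def, h1, hν.smul, L0.abs_ind, nu_neg]
      rw [h2, ← MeasureTheory.AEEqFun.coeFn_le]
      filter_upwards [MeasureTheory.AEEqFun.coeFn_mul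
          (L0.ind μ ℝ (A n) (hA.meas n)) (ν i (s k - x₀)),
        L0.ind_coeFn (A n) (hA.meas n),
        MeasureTheory.AEEqFun.coeFn_le.mpr (hν.nonneg i (s k - x₀)),
        MeasureTheory.AEEqFun.coeFn_zero (β := ℝ) (μ := μ)] with ω e1 e2 e3 e4
      rw [e1]
      simp only [Pi.mul_apply]
      rw [e2]
      have hnn : 0 ≤ ν i (s k - x₀) ω := by rw [e4] at e3; simpa using e3
      by_cases hω : ω ∈ A n
      · simp [Set.indicator_apply, hω]
      · simp [Set.indicator_apply, hω]; exact hnn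
    have hmeas : ∀ e : ℝ, 0 < e → ∀ᵐ ω ∂μ, g ω < e := by
      intro e he
      have h1 : ∀ l : ℝ, 0 < l → l < 1 → (μ {ω | g ω < e}).toReal > 1 - l := by
        intro l hl hl1
        obtain ⟨k₀, hk₀⟩ := hx₀ {i} (Finset.singleton_nonempty i) e l he hl hl1
        have hk1 := hk₀ ⟨max k₀.down (n + 1)⟩ (le_max_left k₀.down (n + 1))
        have hnq : nQ ν {i} (Finset.singleton_nonempty i) (s (max k₀.down (n + 1)) - x₀)
            = ν i (s (max k₀.down (n + 1)) - x₀) := by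
          unfold nQ
          exact Finset.sup'_singleton _
        simp only at hk1
        rw [hnq] at hk1
        have hb := MeasureTheory.AEEqFun.coeFn_le.mpr
          (hbound (max k₀.down (n + 1)) (lt_of_lt_of_le (Nat.lt_succ_self n) (le_max_right _ _)))
        have hsub : {ω | ν i (s (max k₀.down (n + 1)) - x₀) ω < e} ≤ᵐ[μ] {ω | g ω < e} := by
          filter_upwards [hb] with ω hb1 hb2
          exact lt_of_le_of_lt hb1 hb2
        have hmono := ENNReal.toReal_mono (measure_ne_top μ _) (measure_mono_ae hsub)
        linarith
      have htop : (μ {ω | g ω < e}).toReal = 1 := by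
        have hle : (μ {ω | g ω < e}).toReal ≤ 1 := by
          have := ENNReal.toReal_mono (measure_ne_top μ _)
            (measure_mono (Set.subset_univ {ω | g ω < e}))
          rwa [measure_univ, ENNReal.toReal_one] at this
        have hge : 1 ≤ (μ {ω | g ω < e}).toReal := by
          by_contra hlt
          push_neg at hlt
          have h0t : 0 ≤ (μ {ω | g ω < e}).toReal := ENNReal.toReal_nonneg
          have := h1 ((1 - (μ {ω | g ω < e}).toReal) / 2) (by linarith) (by linarith)
          linarith
        linarith
      have hμ1 : μ {ω | g ω < e} = 1 := (ENNReal.toReal_eq_one_iff _).mp htop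
      have hnm : NullMeasurableSet {ω | g ω < e} μ :=
        nullMeasurableSet_lt g.aemeasurable aemeasurable_const
      have hcompl : μ ({ω | g ω < e}ᶜ) = 0 := by
        rw [measure_compl₀ hnm (measure_ne_top μ _), hμ1, measure_univ, tsub_self]
      rw [ae_iff]
      rw [Set.compl_setOf] at hcompl
      simpa using hcompl
    have hgle : g ≤ 0 := by
      rw [← MeasureTheory.AEEqFun.coeFn_le]
      have hall : ∀ᵐ ω ∂μ, ∀ m : ℕ, g ω < 1 / (m + 1) :=
        MeasureTheory.ae_all_iff.mpr fun m => hmeas _ (by positivity)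
      filter_upwards [hall, MeasureTheory.AEEqFun.coeFn_zero (β := ℝ) (μ := μ)] with ω h1 h2
      rw [h2]
      simp only [Pi.zero_apply]
      by_contra hpos
      push_neg at hpos
      obtain ⟨m, hm⟩ := exists_nat_one_div_lt hpos
      exact absurd (h1 m) (not_lt.mpr (le_of_lt hm))
    exact le_antisymm hgle hg0
  rw [smul_sub] at hsep
  exact sub_eq_zero.mp hsep
end
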